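/- arXiv:2004.06133 — 4 statements merged into one kernel-verified Lean document; each statement's English description precedes it below -/
import Mathlib

section
/- Let n, m ≥ 1, let A₀, A₁ be Hermitian n×n complex matrices with A₀² = A₁² = Iₙ, let B₀, B₁ be Hermitian m×m complex matrices with B₀² = B₁² = Iₘ, and let ρ be a density matrix on ℂⁿ⊗ℂᵐ (an nm×nm positive semidefinite matrix with trace 1). Then |Tr(ρ · (A₀⊗B₀ + A₀⊗B₁ + A₁⊗B₀ − A₁⊗B₁))| ≤ 2√2 (Tsirelson's bound: the largest CHSH value achievable by local measurements on a shared quantum state is 2√2). -/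
open Matrix Kronecker ComplexOrder

lemma kron_conjTranspose {n m p q : Type*} (A : Matrix n m ℂ) (B : Matrix p q ℂ) :
    (A ⊗ₖ B)ᴴ = Aᴴ ⊗ₖ Bᴴ := by
  ext ⟨i, j⟩ ⟨k, l⟩
  simp [Matrix.conjTranspose_apply, Matrix.kroneckerMap_apply, mul_comm]

lemma trace_nonneg_of_psd {k : Type*} [Fintype k] {P : Matrix k k ℂ}
    (hP : P.PosSemidef) : 0 ≤ P.trace := by
  classical
  apply Finset.sum_nonneg
  intro i _
  exact hP.diag_nonneg

open scoped MatrixOrder in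
lemma trace_mul_nonneg {k : Type*} [Fintype k] [DecidableEq k] {P Q : Matrix k k ℂ}
    (hP : P.PosSemidef) (hQ : Q.PosSemidef) : 0 ≤ (P * Q).trace := by
  have h1 : P = CFC.sqrt P * CFC.sqrt P := (CFC.sqrt_mul_sqrt_self P hP.nonneg).symm
  have h2 : (P * Q).trace = (CFC.sqrt P * Q * (CFC.sqrt P)ᴴ).trace := by
    rw [(CFC.sqrt_nonneg P).posSemidef.1.eq]
    conv_lhs => rw [h1]
    rw [mul_assoc, Matrix.trace_mul_comm, mul_assoc]
  rw [h2]
  exact trace_nonneg_of_psd (hQ.mul_mul_conjTranspose_same (CFC.sqrt P))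

lemma kron_sub_left {n m p q : Type*} (A B : Matrix n m ℂ) (C : Matrix p q ℂ) :
    (A - B) ⊗ₖ C = A ⊗ₖ C - B ⊗ₖ C := by
  ext ⟨i, j⟩ ⟨k, l⟩; simp [Matrix.kroneckerMap_apply, sub_mul]

lemma kron_sub_right {n m p q : Type*} (A : Matrix n m ℂ) (B C : Matrix p q ℂ) :
    A ⊗ₖ (B - C) = A ⊗ₖ B - A ⊗ₖ C := by
  ext ⟨i, j⟩ ⟨k, l⟩; simp [Matrix.kroneckerMap_apply, mul_sub]

lemma key {n m : ℕ} (A₀ A₁ : Matrix (Fin n) (Fin n) ℂ) (B₀ B₁ : Matrix (Fin m) (Fin m) ℂ)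
    (hA₀sq : A₀ * A₀ = 1) (hA₁sq : A₁ * A₁ = 1) (hB₀sq : B₀ * B₀ = 1) (hB₁sq : B₁ * B₁ = 1)
    (s : ℂ) (hs : s * s = 2) :
    (s • (A₀ ⊗ₖ (1 : Matrix (Fin m) (Fin m) ℂ)) + (1 : Matrix (Fin n) (Fin n) ℂ) ⊗ₖ (B₀ + B₁)) *
      (s • (A₀ ⊗ₖ 1) + 1 ⊗ₖ (B₀ + B₁)) +
    (s • (A₁ ⊗ₖ 1) + 1 ⊗ₖ (B₀ - B₁)) * (s • (A₁ ⊗ₖ 1) + 1 ⊗ₖ (B₀ - B₁))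
    = (8 : ℂ) • 1 + (2 * s) • (A₀ ⊗ₖ B₀ + A₀ ⊗ₖ B₁ + A₁ ⊗ₖ B₀ - A₁ ⊗ₖ B₁) := by
  simp only [mul_add, add_mul, smul_mul_assoc, mul_smul_comm, smul_smul, hs,
    ← Matrix.mul_kronecker_mul, Matrix.one_mul, Matrix.mul_one, one_mul, mul_one,
    hA₀sq, hA₁sq, hB₀sq, hB₁sq, Matrix.one_kronecker_one,
    Matrix.kronecker_add, Matrix.add_kronecker, kron_sub_left, kron_sub_right,
    mul_sub, sub_mul]
  match_scalars <;> first
  | linear_combination (2:ℂ) * hs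
  | linear_combination (-2:ℂ) * hs
  | ring

lemma kron_neg_right {n m p q : Type*} (A : Matrix n m ℂ) (B : Matrix p q ℂ) :
    A ⊗ₖ (-B) = -(A ⊗ₖ B) := by
  ext ⟨i, j⟩ ⟨k, l⟩; simp [Matrix.kroneckerMap_apply]

/-- Tsirelson's bound: for Hermitian `A₀ A₁` (n×n), `B₀ B₁` (m×m) squaring to
the identity and a density matrix `ρ` on `ℂⁿ⊗ℂᵐ`,
`|Tr(ρ·(A₀⊗B₀ + A₀⊗B₁ + A₁⊗B₀ − A₁⊗B₁))| ≤ 2√2`. -/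
theorem stmt_1 (n m : ℕ) (hn : 1 ≤ n) (hm : 1 ≤ m)
    (A₀ A₁ : Matrix (Fin n) (Fin n) ℂ) (B₀ B₁ : Matrix (Fin m) (Fin m) ℂ)
    (hA₀ : A₀.IsHermitian) (hA₁ : A₁.IsHermitian)
    (hB₀ : B₀.IsHermitian) (hB₁ : B₁.IsHermitian)
    (hA₀sq : A₀ * A₀ = 1) (hA₁sq : A₁ * A₁ = 1)
    (hB₀sq : B₀ * B₀ = 1) (hB₁sq : B₁ * B₁ = 1)
    (ρ : Matrix (Fin n × Fin m) (Fin n × Fin m) ℂ)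
    (hρ : ρ.PosSemidef) (hρtr : ρ.trace = 1) :
    ‖(ρ * (A₀ ⊗ₖ B₀ + A₀ ⊗ₖ B₁ + A₁ ⊗ₖ B₀ - A₁ ⊗ₖ B₁)).trace‖
      ≤ 2 * Real.sqrt 2 := by
  set s : ℂ := ((Real.sqrt 2 : ℝ) : ℂ) with hs_def
  have hs : s * s = 2 := by
    rw [hs_def, ← Complex.ofReal_mul, Real.mul_self_sqrt (by norm_num)]
    norm_num
  have hstar : star s = s := by rw [hs_def]; exact Complex.conj_ofReal _
  set C : Matrix (Fin n × Fin m) (Fin n × Fin m) ℂ :=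
    A₀ ⊗ₖ B₀ + A₀ ⊗ₖ B₁ + A₁ ⊗ₖ B₀ - A₁ ⊗ₖ B₁ with hC_def
  -- Hermitian helpers
  have hermX : ∀ (A : Matrix (Fin n) (Fin n) ℂ) (B : Matrix (Fin m) (Fin m) ℂ),
      A.IsHermitian → B.IsHermitian →
      (s • (A ⊗ₖ (1 : Matrix (Fin m) (Fin m) ℂ)) + (1 : Matrix (Fin n) (Fin n) ℂ) ⊗ₖ B).IsHermitian := by
    intro A B hA hB
    unfold Matrix.IsHermitian
    simp only [conjTranspose_add, conjTranspose_smul, kron_conjTranspose,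
      hstar, hA.eq, hB.eq, conjTranspose_one]
  have psdXX : ∀ (X : Matrix (Fin n × Fin m) (Fin n × Fin m) ℂ), X.IsHermitian →
      (X * X).PosSemidef := by
    intro X hX
    conv => rw [show X * X = Xᴴ * X by rw [hX.eq]]
    exact Matrix.posSemidef_conjTranspose_mul_self X
  -- positivity of 8•1 ± (2s)•C
  have hMp : ((8 : ℂ) • (1 : Matrix (Fin n × Fin m) (Fin n × Fin m) ℂ) + (2 * s) • C).PosSemidef := by
    rw [← key A₀ A₁ B₀ B₁ hA₀sq hA₁sq hB₀sq hB₁sq s hs]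
    exact (psdXX _ (hermX A₀ (B₀ + B₁) hA₀ (hB₀.add hB₁))).add
      (psdXX _ (hermX A₁ (B₀ - B₁) hA₁ (hB₀.sub hB₁)))
  have hMm : ((8 : ℂ) • (1 : Matrix (Fin n × Fin m) (Fin n × Fin m) ℂ) - (2 * s) • C).PosSemidef := by
    have hk := key A₀ A₁ (-B₀) (-B₁) hA₀sq hA₁sq (by rw [neg_mul_neg, hB₀sq])
      (by rw [neg_mul_neg, hB₁sq]) s hs
    have hrw : (8 : ℂ) • (1 : Matrix (Fin n × Fin m) (Fin n × Fin m) ℂ) - (2 * s) • C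
        = (8 : ℂ) • 1 + (2 * s) • (A₀ ⊗ₖ (-B₀) + A₀ ⊗ₖ (-B₁) + A₁ ⊗ₖ (-B₀) - A₁ ⊗ₖ (-B₁)) := by
      simp only [kron_neg_right, hC_def]
      module
    rw [hrw, ← hk]
    exact (psdXX _ (hermX A₀ (-B₀ + -B₁) hA₀ (hB₀.neg.add hB₁.neg))).add
      (psdXX _ (hermX A₁ (-B₀ - -B₁) hA₁ (hB₀.neg.sub hB₁.neg)))
  -- trace inequalities
  set t : ℂ := (ρ * C).trace with ht_def
  have htr : ∀ M : Matrix (Fin n × Fin m) (Fin n × Fin m) ℂ, ∀ c : ℂ,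
      (ρ * ((8 : ℂ) • 1 + c • M)).trace = 8 + c * (ρ * M).trace := by
    intro M c
    rw [mul_add, Matrix.trace_add, Matrix.mul_smul, Matrix.mul_smul, Matrix.trace_smul,
      Matrix.trace_smul, Matrix.mul_one, hρtr, smul_eq_mul, smul_eq_mul, mul_one]
  have h1 : (0 : ℂ) ≤ 8 + (2 * s) * t := by
    rw [← htr C (2 * s)]; exact trace_mul_nonneg hρ hMp
  have h2 : (0 : ℂ) ≤ 8 - (2 * s) * t := by
    have : (0 : ℂ) ≤ 8 + (-(2 * s)) * t := by
      rw [← htr C (-(2 * s))]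
      have : (8 : ℂ) • (1 : Matrix (Fin n × Fin m) (Fin n × Fin m) ℂ) + (-(2 * s)) • C
          = (8 : ℂ) • 1 - (2 * s) • C := by module
      rw [this]; exact trace_mul_nonneg hρ hMm
    rwa [neg_mul, ← sub_eq_add_neg] at this
  -- t is real
  have hCH : C.IsHermitian := by
    unfold Matrix.IsHermitian
    simp only [hC_def, conjTranspose_add, conjTranspose_sub, kron_conjTranspose,
      hA₀.eq, hA₁.eq, hB₀.eq, hB₁.eq]
  have htreal : (starRingEnd ℂ) t = t := by
    rw [ht_def, show (starRingEnd ℂ) (ρ * C).trace = star (ρ * C).trace from rfl,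
      ← Matrix.trace_conjTranspose, conjTranspose_mul, hCH.eq, hρ.1.eq,
      Matrix.trace_mul_comm]
  have ht' : ((t.re : ℝ) : ℂ) = t := Complex.conj_eq_iff_re.mp htreal
  set r : ℝ := t.re with hr_def
  have hsq : Real.sqrt 2 * Real.sqrt 2 = 2 := Real.mul_self_sqrt (by norm_num)
  have h1' : (0 : ℝ) ≤ 8 + 2 * Real.sqrt 2 * r := by
    have he : ((8 + 2 * Real.sqrt 2 * r : ℝ) : ℂ) = 8 + (2 * s) * t := by
      rw [← ht', hs_def]; push_cast; ring
    exact Complex.zero_le_real.mp (he ▸ h1)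
  have h2' : (0 : ℝ) ≤ 8 - 2 * Real.sqrt 2 * r := by
    have he : ((8 - 2 * Real.sqrt 2 * r : ℝ) : ℂ) = 8 - (2 * s) * t := by
      rw [← ht', hs_def]; push_cast; ring
    exact Complex.zero_le_real.mp (he ▸ h2)
  rw [← ht', Complex.norm_real, Real.norm_eq_abs]
  rw [abs_le]
  constructor
  · nlinarith [Real.sqrt_nonneg 2]
  · nlinarith [Real.sqrt_nonneg 2]
end

section
/- The PR box cannot be generated by local measurements on a shared quantum state: there do not exist n, m ≥ 1, a density matrix ρ on ℂⁿ⊗ℂᵐ (an nm×nm positive semidefinite matrix with trace 1), positive semidefinite n×n matrices M_{a|x} (a, x ∈ {0,1}) with M_{0|x} + M_{1|x} = Iₙ for each x, and positive semidefinite m×m matrices N_{b|y} (b, y ∈ {0,1}) with N_{0|y} + N_{1|y} = Iₘ for each y, such that Tr(ρ · (M_{a|x} ⊗ N_{b|y})) = p_PR(ab|xy) for all a, b, x, y ∈ {0,1}. -/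
open Matrix Kronecker ComplexOrder

lemma my_trace_ctc_zero {k l : Type*} [Fintype k] [Fintype l] {C : Matrix k l ℂ}
    (h : (Cᴴ * C).trace = 0) : C = 0 := by
  have hd : ∀ j, (Cᴴ * C) j j = dotProduct (star (fun i => C i j)) (fun i => C i j) := by
    intro j; simp [Matrix.mul_apply, dotProduct, Matrix.conjTranspose_apply]
  have hnn : ∀ j ∈ Finset.univ, (0:ℂ) ≤ (Cᴴ * C) j j := by
    intro j _; rw [hd]; exact dotProduct_star_self_nonneg _
  have h0 : ∀ j ∈ Finset.univ, (Cᴴ * C) j j = 0 :=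
    (Finset.sum_eq_zero_iff_of_nonneg hnn).mp h
  ext i j
  have := (dotProduct_star_self_eq_zero).mp ((hd j) ▸ h0 j (Finset.mem_univ j))
  exact congrFun this i

lemma my_psd_eq_ct_mul_self {k : Type*} [Fintype k] [DecidableEq k] {A : Matrix k k ℂ}
    (hA : A.PosSemidef) : ∃ B : Matrix k k ℂ, A = Bᴴ * B := by
  open scoped MatrixOrder in
  obtain ⟨B, hB⟩ := CStarAlgebra.nonneg_iff_eq_star_mul_self.mp hA.nonneg
  exact ⟨B, hB⟩

lemma my_psd_mul_eq_zero {k : Type*} [Fintype k] [DecidableEq k] {ρ X : Matrix k k ℂ}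
    (hρ : ρ.PosSemidef) (hX : X.PosSemidef) (h : (ρ * X).trace = 0) : ρ * X = 0 := by
  obtain ⟨P, rfl⟩ := my_psd_eq_ct_mul_self hρ
  obtain ⟨Q, rfl⟩ := my_psd_eq_ct_mul_self hX
  have key : P * Qᴴ = 0 := by
    apply my_trace_ctc_zero
    have e : (P * Qᴴ)ᴴ * (P * Qᴴ) = Q * (Pᴴ * P * Qᴴ) := by
      rw [Matrix.conjTranspose_mul, Matrix.conjTranspose_conjTranspose]; noncomm_ring
    rw [e, Matrix.trace_mul_comm, mul_assoc]
    exact h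
  calc Pᴴ * P * (Qᴴ * Q) = Pᴴ * (P * Qᴴ) * Q := by noncomm_ring
  _ = 0 := by rw [key, mul_zero, zero_mul]

lemma my_kron_conjT {n m : ℕ} (A : Matrix (Fin n) (Fin n) ℂ) (B : Matrix (Fin m) (Fin m) ℂ) :
    (A ⊗ₖ B)ᴴ = Aᴴ ⊗ₖ Bᴴ := by
  ext ⟨i, j⟩ ⟨k, l⟩
  simp [Matrix.conjTranspose_apply, Matrix.kroneckerMap_apply, star_mul', mul_comm]

lemma my_kron_psd {n m : ℕ} {M : Matrix (Fin n) (Fin n) ℂ} {N : Matrix (Fin m) (Fin m) ℂ}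
    (hM : M.PosSemidef) (hN : N.PosSemidef) : (M ⊗ₖ N).PosSemidef := by
  obtain ⟨A, rfl⟩ := my_psd_eq_ct_mul_self hM
  obtain ⟨B, rfl⟩ := my_psd_eq_ct_mul_self hN
  rw [Matrix.mul_kronecker_mul, ← my_kron_conjT]
  exact Matrix.posSemidef_conjTranspose_mul_self _


/-- The PR box correlations: `p_PR(ab|xy) = 1/2` if `a ⊕ b = x·y`, else `0`
(arithmetic in `Fin 2`, i.e. mod 2). -/
noncomputable def pPR (a b x y : Fin 2) : ℝ := if a + b = x * y then 1/2 else 0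

/-- the PR box cannot be generated by local POVM measurements on a shared
quantum state. -/
theorem stmt_2 :
    ¬ ∃ (n m : ℕ), 1 ≤ n ∧ 1 ≤ m ∧
      ∃ (ρ : Matrix (Fin n × Fin m) (Fin n × Fin m) ℂ)
        (M : Fin 2 → Fin 2 → Matrix (Fin n) (Fin n) ℂ)
        (N : Fin 2 → Fin 2 → Matrix (Fin m) (Fin m) ℂ),
        ρ.PosSemidef ∧ ρ.trace = 1 ∧
        (∀ a x, (M a x).PosSemidef) ∧ (∀ x, M 0 x + M 1 x = 1) ∧
        (∀ b y, (N b y).PosSemidef) ∧ (∀ y, N 0 y + N 1 y = 1) ∧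
        (∀ a b x y, (ρ * (M a x ⊗ₖ N b y)).trace = (pPR a b x y : ℂ)) := by
  rintro ⟨n, m, hn, hm, ρ, M, N, hρ, hTr, hM, hMsum, hN, hNsum, hp⟩
  -- losing outcomes have zero probability, hence `ρ * (M ⊗ N) = 0`
  have hz : ∀ a b x y : Fin 2, a + b ≠ x * y → ρ * (M a x ⊗ₖ N b y) = 0 := by
    intro a b x y hne
    apply my_psd_mul_eq_zero hρ (my_kron_psd (hM a x) (hN b y))
    rw [hp a b x y]
    simp [pPR, hne]
  -- for the three settings with x*y = 0, marginals coincide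
  have key : ∀ x y : Fin 2, ρ * (M 1 x ⊗ₖ N 0 y) = 0 → ρ * (M 0 x ⊗ₖ N 1 y) = 0 →
      ρ * ((1 : Matrix (Fin n) (Fin n) ℂ) ⊗ₖ N 0 y) = ρ * (M 0 x ⊗ₖ N 0 y) ∧
      ρ * (M 0 x ⊗ₖ (1 : Matrix (Fin m) (Fin m) ℂ)) = ρ * (M 0 x ⊗ₖ N 0 y) := by
    intro x y h10 h01
    constructor
    · calc ρ * ((1 : Matrix (Fin n) (Fin n) ℂ) ⊗ₖ N 0 y)
          = ρ * ((M 0 x + M 1 x) ⊗ₖ N 0 y) := by rw [hMsum x]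
      _ = ρ * (M 0 x ⊗ₖ N 0 y) + ρ * (M 1 x ⊗ₖ N 0 y) := by
          rw [Matrix.add_kronecker, mul_add]
      _ = ρ * (M 0 x ⊗ₖ N 0 y) := by rw [h10, add_zero]
    · calc ρ * (M 0 x ⊗ₖ (1 : Matrix (Fin m) (Fin m) ℂ))
          = ρ * (M 0 x ⊗ₖ (N 0 y + N 1 y)) := by rw [hNsum y]
      _ = ρ * (M 0 x ⊗ₖ N 0 y) + ρ * (M 0 x ⊗ₖ N 1 y) := by
          rw [Matrix.kronecker_add, mul_add]
      _ = ρ * (M 0 x ⊗ₖ N 0 y) := by rw [h01, add_zero]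
  obtain ⟨q00, p00⟩ := key 0 0 (hz 1 0 0 0 (by decide)) (hz 0 1 0 0 (by decide))
  obtain ⟨q01, p01⟩ := key 0 1 (hz 1 0 0 1 (by decide)) (hz 0 1 0 1 (by decide))
  obtain ⟨q10, p10⟩ := key 1 0 (hz 1 0 1 0 (by decide)) (hz 0 1 1 0 (by decide))
  -- abbreviations: P x = ρ·(M₀ₓ ⊗ 1), Q y = ρ·(1 ⊗ N₀ᵧ)
  set P : Fin 2 → Matrix (Fin n × Fin m) (Fin n × Fin m) ℂ :=
    fun x => ρ * (M 0 x ⊗ₖ (1 : Matrix (Fin m) (Fin m) ℂ)) with hP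
  set Q : Fin 2 → Matrix (Fin n × Fin m) (Fin n × Fin m) ℂ :=
    fun y => ρ * ((1 : Matrix (Fin n) (Fin n) ℂ) ⊗ₖ N 0 y) with hQ
  have hP0Q0 : P 0 = Q 0 := by rw [hP, hQ]; dsimp only; rw [p00, q00]
  have hP0Q1 : P 0 = Q 1 := by rw [hP, hQ]; dsimp only; rw [p01, q01]
  have hP1Q0 : P 1 = Q 0 := by rw [hP, hQ]; dsimp only; rw [p10, q10]
  have hP1Q1 : P 1 = Q 1 := by rw [hP1Q0, ← hP0Q0, hP0Q1]
  -- the x = y = 1 setting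
  have h0011 : ρ * (M 0 1 ⊗ₖ N 0 1) = 0 := hz 0 0 1 1 (by decide)
  have h1111 : ρ * (M 1 1 ⊗ₖ N 1 1) = 0 := hz 1 1 1 1 (by decide)
  -- P 1 = ρ·(M₀₁ ⊗ N₁₁) and Q 1 = ρ·(M₁₁ ⊗ N₀₁)
  have hP1 : P 1 = ρ * (M 0 1 ⊗ₖ N 1 1) := by
    rw [hP]; dsimp only
    calc ρ * (M 0 1 ⊗ₖ (1 : Matrix (Fin m) (Fin m) ℂ))
        = ρ * (M 0 1 ⊗ₖ (N 0 1 + N 1 1)) := by rw [hNsum 1]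
    _ = ρ * (M 0 1 ⊗ₖ N 0 1) + ρ * (M 0 1 ⊗ₖ N 1 1) := by
        rw [Matrix.kronecker_add, mul_add]
    _ = ρ * (M 0 1 ⊗ₖ N 1 1) := by rw [h0011, zero_add]
  have hQ1 : Q 1 = ρ * (M 1 1 ⊗ₖ N 0 1) := by
    rw [hQ]; dsimp only
    calc ρ * ((1 : Matrix (Fin n) (Fin n) ℂ) ⊗ₖ N 0 1)
        = ρ * ((M 0 1 + M 1 1) ⊗ₖ N 0 1) := by rw [hMsum 1]
    _ = ρ * (M 0 1 ⊗ₖ N 0 1) + ρ * (M 1 1 ⊗ₖ N 0 1) := by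
        rw [Matrix.add_kronecker, mul_add]
    _ = ρ * (M 1 1 ⊗ₖ N 0 1) := by rw [h0011, zero_add]
  -- ρ = P 1 + Q 1
  have hρsum : ρ = P 1 + Q 1 := by
    have h11 : (1 : Matrix (Fin n × Fin m) (Fin n × Fin m) ℂ)
        = (1 : Matrix (Fin n) (Fin n) ℂ) ⊗ₖ (1 : Matrix (Fin m) (Fin m) ℂ) :=
      (Matrix.one_kronecker_one).symm
    calc ρ = ρ * 1 := by rw [mul_one]
    _ = ρ * (((M 0 1 + M 1 1) : Matrix (Fin n) (Fin n) ℂ) ⊗ₖ ((N 0 1 + N 1 1) : Matrix (Fin m) (Fin m) ℂ)) := by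
        rw [hMsum 1, hNsum 1, ← h11]
    _ = ρ * (M 0 1 ⊗ₖ N 0 1) + ρ * (M 0 1 ⊗ₖ N 1 1)
        + (ρ * (M 1 1 ⊗ₖ N 0 1) + ρ * (M 1 1 ⊗ₖ N 1 1)) := by
        rw [Matrix.add_kronecker, Matrix.kronecker_add, Matrix.kronecker_add, mul_add, mul_add, mul_add]
    _ = P 1 + Q 1 := by rw [h0011, h1111, hP1, hQ1, zero_add, add_zero]
  -- but also ρ·(M₀₁ ⊗ N₀₁) = P 1 · (1 ⊗ N₀₁), hence P 1 = Q 1 = 0, hence ρ = 0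
  have hsplit : (M 0 1 ⊗ₖ N 0 1) = (M 0 1 ⊗ₖ (1 : Matrix (Fin m) (Fin m) ℂ))
      * ((1 : Matrix (Fin n) (Fin n) ℂ) ⊗ₖ N 0 1) := by
    rw [← Matrix.mul_kronecker_mul, mul_one, one_mul]
  have hPQ0 : P 1 * ((1 : Matrix (Fin n) (Fin n) ℂ) ⊗ₖ N 0 1) = 0 := by
    rw [hP]; dsimp only
    rw [mul_assoc, ← hsplit]
    exact h0011
  have hQ1zero : Q 1 = 0 := by
    have := congrArg (· * ((1 : Matrix (Fin n) (Fin n) ℂ) ⊗ₖ N 0 1)) hρsum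
    rw [add_mul, hPQ0, zero_add, ← hP1Q1, hPQ0] at this
    -- this : ρ * (1 ⊗ₖ N 0 1) = 0, i.e. Q 1 = 0
    rw [hQ]; dsimp only; exact this
  have hρ0 : ρ = 0 := by rw [hρsum, hP1Q1, hQ1zero, add_zero]
  rw [hρ0] at hTr
  simp at hTr
end

section
/- A bipartite channel with trivial Alice input that is nonsignaling from Bob to Alice is semilocalizable, and hence realizable by local operations and shared entanglement (the other direction used in the proof that a bipartite resource type with a trivial input or output is LOSE-trivial): let E : M_{d_Y}(ℂ) → M_{d_A·d_B}(ℂ) be a CPTP map, with output on ℂ^{d_A} ⊗ ℂ^{d_B}, such that there is a density matrix σ_A on ℂ^{d_A} with Tr₂[E(ρ)] = Tr(ρ)·σ_A for every matrix ρ ∈ M_{d_Y}(ℂ). Then there exist m ≥ 1, a density matrix χ on ℂ^{d_A} ⊗ ℂᵐ, and a CPTP map Φ : M_{m·d_Y}(ℂ) → M_{d_B}(ℂ), such that E(ρ) = (id_{d_A} ⊗ Φ)(χ ⊗ ρ) for all ρ, where χ ⊗ ρ is regarded as a matrix on ℂ^{d_A} ⊗ (ℂᵐ ⊗ ℂ^{d_Y}).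 -/
open Matrix Kronecker ComplexOrder ComplexConjugate

/-- A map between matrix algebras is CPTP (a quantum channel) if it admits a Kraus
representation `E(ρ) = Σ_k K_k ρ K_k†` with `Σ_k K_k† K_k = I`. -/
def IsCPTP {α β : Type*} [Fintype α] [DecidableEq α] [Fintype β]
    (E : Matrix α α ℂ → Matrix β β ℂ) : Prop :=
  ∃ (N : ℕ) (K : Fin N → Matrix β α ℂ),
    (∀ ρ, E ρ = ∑ i, K i * ρ * (K i)ᴴ) ∧ ∑ i, (K i)ᴴ * K i = 1

/-- The partial trace over the second tensor factor:
`Tr₂(M) = Σ_j (I ⊗ ⟨e_j|) M (I ⊗ |e_j⟩)`. -/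
noncomputable def ptrace2 {α β : Type*} [Fintype β]
    (M : Matrix (α × β) (α × β) ℂ) : Matrix α α ℂ :=
  Matrix.of fun i j => ∑ l, M (i, l) (j, l)

private lemma outer_psd {n : Type*} [Fintype n] (v : n → ℂ) :
    (Matrix.of fun i j => v i * conj (v j)).PosSemidef := by
  refine Matrix.PosSemidef.of_dotProduct_mulVec_nonneg ?_ ?_
  · ext i j
    simp [Matrix.conjTranspose_apply, mul_comm]
  · intro x
    have h : dotProduct (star x) ((Matrix.of fun i j => v i * conj (v j)) *ᵥ x)
        = conj (∑ j, conj (x j) * v j) * (∑ j, conj (x j) * v j) := by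
      simp only [dotProduct, mulVec, Matrix.of_apply, Pi.star_apply, RCLike.star_def,
        map_sum, _root_.map_mul, starRingEnd_self_apply]
      rw [Finset.sum_mul_sum]
      simp only [Finset.mul_sum]
      rw [Finset.sum_comm]
      refine Finset.sum_congr rfl fun i _ => Finset.sum_congr rfl fun j _ => by ring
    rw [h, mul_comm, Complex.mul_conj]
    exact_mod_cast Complex.normSq_nonneg _

private lemma swap3 {ι₁ ι₂ ι₃ : Type*} [Fintype ι₁] [Fintype ι₂] [Fintype ι₃]
    (F : ι₁ → ι₂ → ι₃ → ℂ) :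
    ∑ a, ∑ b, ∑ c, F a b c = ∑ b, ∑ c, ∑ a, F a b c :=
  calc ∑ a, ∑ b, ∑ c, F a b c = ∑ b, ∑ a, ∑ c, F a b c := by rw [Finset.sum_comm]
    _ = ∑ b, ∑ c, ∑ a, F a b c := Finset.sum_congr rfl fun b _ => by rw [Finset.sum_comm]

private lemma swap4 {ι₁ ι₂ ι₃ ι₄ : Type*} [Fintype ι₁] [Fintype ι₂] [Fintype ι₃] [Fintype ι₄]
    (F : ι₁ → ι₂ → ι₃ → ι₄ → ℂ) :
    ∑ k, ∑ b, ∑ a, ∑ a', F k b a a' = ∑ a, ∑ a', ∑ k, ∑ b, F k b a a' :=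
  calc ∑ k, ∑ b, ∑ a, ∑ a', F k b a a'
      = ∑ k, ∑ a, ∑ b, ∑ a', F k b a a' :=
        Finset.sum_congr rfl fun k _ => by rw [Finset.sum_comm]
    _ = ∑ a, ∑ k, ∑ b, ∑ a', F k b a a' := by rw [Finset.sum_comm]
    _ = ∑ a, ∑ k, ∑ a', ∑ b, F k b a a' :=
        Finset.sum_congr rfl fun a _ => Finset.sum_congr rfl fun k _ => by rw [Finset.sum_comm]
    _ = ∑ a, ∑ a', ∑ k, ∑ b, F k b a a' :=
        Finset.sum_congr rfl fun a _ => by rw [Finset.sum_comm]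

theorem construction (dA dB dY N : ℕ) (hdB : 0 < dB)
    (p : Fin dA → ℝ) (u : Matrix (Fin dA) (Fin dA) ℂ)
    (K : Fin N → Matrix (Fin dA × Fin dB) (Fin dY) ℂ)
    (hp : ∀ j, 0 ≤ p j) (hptr : ∑ j, p j = 1)
    (hcol : ∀ j j', ∑ a, conj (u a j) * u a j' = if j = j' then (1:ℂ) else 0)
    (hrow : ∀ a a', ∑ j, u a j * conj (u a' j) = if a = a' then (1:ℂ) else 0)
    (hkey : ∀ a a' y y', ∑ k, ∑ b, K k (a, b) y * conj (K k (a', b) y')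
        = (if y = y' then (1:ℂ) else 0) * ∑ j, (p j : ℂ) * u a j * conj (u a' j)) :
    ∃ χ : Matrix (Fin dA × Fin dA) (Fin dA × Fin dA) ℂ, χ.PosSemidef ∧ χ.trace = 1 ∧
      ∃ (N' : ℕ) (L : Fin N' → Matrix (Fin dB) (Fin dA × Fin dY) ℂ),
        (∑ i, (L i)ᴴ * L i = 1) ∧
        ∀ ρ : Matrix (Fin dY) (Fin dY) ℂ, (∑ k, K k * ρ * (K k)ᴴ) = ∑ i,
          ((1 : Matrix (Fin dA) (Fin dA) ℂ) ⊗ₖ L i) *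
            (Matrix.reindex (Equiv.prodAssoc (Fin dA) (Fin dA) (Fin dY))
              (Equiv.prodAssoc (Fin dA) (Fin dA) (Fin dY)) (χ ⊗ₖ ρ)) *
            ((1 : Matrix (Fin dA) (Fin dA) ℂ) ⊗ₖ L i)ᴴ := by
  classical
  set ψ : Fin dA × Fin dA → ℂ := fun x => (Real.sqrt (p x.2) : ℂ) * u x.1 x.2 with hψ
  set χ : Matrix (Fin dA × Fin dA) (Fin dA × Fin dA) ℂ :=
    Matrix.of fun x y => ψ x * conj (ψ y) with hχ
  have hχpsd : χ.PosSemidef := outer_psd ψ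
  have hχtr : χ.trace = 1 := by
    have h1 : χ.trace = ∑ j, ∑ a, ((Real.sqrt (p j) : ℂ) * (Real.sqrt (p j) : ℂ)) *
        (conj (u a j) * u a j) := by
      rw [Matrix.trace, Fintype.sum_prod_type, Finset.sum_comm]
      refine Finset.sum_congr rfl fun j _ => Finset.sum_congr rfl fun a _ => ?_
      simp only [Matrix.diag, hχ, Matrix.of_apply, hψ, _root_.map_mul, Complex.conj_ofReal]
      ring
    rw [h1]
    have h2 : ∀ j : Fin dA, ∑ a, ((Real.sqrt (p j) : ℂ) * (Real.sqrt (p j) : ℂ)) *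
        (conj (u a j) * u a j) = (p j : ℂ) := by
      intro j
      rw [← Finset.mul_sum, hcol j j, if_pos rfl, mul_one, ← Complex.ofReal_mul,
        Real.mul_self_sqrt (hp j)]
    rw [Finset.sum_congr rfl fun j _ => h2 j]
    rw [← Complex.ofReal_sum, hptr, Complex.ofReal_one]
  -- pseudo-inverse weights
  set q : Fin dA → ℂ := fun j => if p j = 0 then 0 else ((Real.sqrt (p j))⁻¹ : ℂ) with hq
  have hqconj : ∀ j, conj (q j) = q j := by
    intro j
    simp only [hq]
    split_ifs with h
    · exact map_zero _
    · rw [map_inv₀, Complex.conj_ofReal]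
  have hqq : ∀ j, p j ≠ 0 → q j * q j * (p j : ℂ) = 1 := by
    intro j hj
    have hs : Real.sqrt (p j) ≠ 0 :=
      Real.sqrt_ne_zero'.mpr (lt_of_le_of_ne (hp j) (Ne.symm hj))
    have hs' : (Real.sqrt (p j) : ℂ) ≠ 0 := Complex.ofReal_ne_zero.mpr hs
    simp only [hq, if_neg hj]
    rw [← Complex.ofReal_inv, ← Complex.ofReal_mul, ← Complex.ofReal_mul, ← Complex.ofReal_one]
    congr 1
    field_simp
    exact (Real.sq_sqrt (hp j)).symm
  have hsq : ∀ j, (Real.sqrt (p j) : ℂ) * q j = if p j = 0 then 0 else 1 := by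
    intro j
    simp only [hq]
    split_ifs with h
    · simp [h]
    · have hs : Real.sqrt (p j) ≠ 0 :=
        Real.sqrt_ne_zero'.mpr (lt_of_le_of_ne (hp j) (Ne.symm h))
      exact mul_inv_cancel₀ (Complex.ofReal_ne_zero.mpr hs)
  set E0 : Fin dA → ℂ := fun j => if p j = 0 then 1 else 0 with hE0
  have hE0conj : ∀ j, conj (E0 j) = E0 j := by
    intro j; simp only [hE0]; split_ifs <;> simp
  have hE0sq : ∀ j, E0 j * E0 j = E0 j := by
    intro j; simp only [hE0]; split_ifs <;> simp
  have hE0p : ∀ j, E0 j * (p j : ℂ) = 0 := by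
    intro j; simp only [hE0]; split_ifs with h <;> simp [h]
  -- Kraus family
  set LA : Fin N → Matrix (Fin dB) (Fin dA × Fin dY) ℂ := fun k =>
    Matrix.of fun b jy => q jy.1 * ∑ a, conj (u a jy.1) * K k (a, b) jy.2 with hLA
  set LB : Fin (dA * dY) → Matrix (Fin dB) (Fin dA × Fin dY) ℂ := fun t =>
    Matrix.of fun b jy =>
      if p jy.1 = 0 ∧ b = (⟨0, hdB⟩ : Fin dB) ∧ t = finProdFinEquiv jy then 1 else 0 with hLB
  set L0 : (Fin N ⊕ Fin (dA * dY)) → Matrix (Fin dB) (Fin dA × Fin dY) ℂ :=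
    Sum.elim LA LB with hL0
  set W : Matrix (Fin dA × (Fin dA × Fin dY)) (Fin dY) ℂ :=
    Matrix.of fun r y => ψ (r.1, r.2.1) * (if r.2.2 = y then 1 else 0) with hWdef
  -- factorization of the reassociated χ ⊗ ρ
  have hW : ∀ ρ : Matrix (Fin dY) (Fin dY) ℂ,
      Matrix.reindex (Equiv.prodAssoc (Fin dA) (Fin dA) (Fin dY))
        (Equiv.prodAssoc (Fin dA) (Fin dA) (Fin dY)) (χ ⊗ₖ ρ) = W * ρ * Wᴴ := by
    intro ρ
    ext r s
    obtain ⟨a, j, y₁⟩ := r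
    obtain ⟨a', j', y₁'⟩ := s
    simp only [Matrix.reindex_apply, Matrix.submatrix_apply, Equiv.prodAssoc_symm_apply,
      Matrix.kroneckerMap_apply, hχ, hWdef, Matrix.mul_apply, Matrix.conjTranspose_apply,
      Matrix.of_apply, _root_.map_mul, ite_mul, mul_ite,
      zero_mul, mul_zero, one_mul, mul_one, Finset.sum_ite_eq, Finset.sum_ite_eq',
      Finset.mem_univ, if_true, apply_ite (star : ℂ → ℂ), star_zero, RCLike.star_def]
    ring
  have hcollapse : ∀ (Lc : Matrix (Fin dB) (Fin dA × Fin dY) ℂ) (a : Fin dA) (b : Fin dB)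
      (y : Fin dY), (((1 : Matrix (Fin dA) (Fin dA) ℂ) ⊗ₖ Lc) * W) (a, b) y
        = ∑ j, ψ (a, j) * Lc b (j, y) := by
    intro Lc a b y
    rw [Matrix.mul_apply, Fintype.sum_prod_type, Finset.sum_comm]
    simp only [Matrix.kroneckerMap_apply, Matrix.one_apply, hWdef, Matrix.of_apply,
      Fintype.sum_prod_type, ite_mul, mul_ite, zero_mul, mul_zero, one_mul, mul_one,
      Finset.sum_ite_eq, Finset.sum_ite_eq', Finset.mem_univ, if_true]
    simp only [Finset.sum_ite_irrel, Finset.sum_const_zero, Finset.sum_ite_eq,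
      Finset.sum_ite_eq', Finset.mem_univ, if_true]
    exact Finset.sum_congr rfl fun j _ => mul_comm _ _
  -- the key overlap computation
  have hT : ∀ (j j' : Fin dA) (y y' : Fin dY),
      ∑ k, ∑ b, conj (∑ a, conj (u a j) * K k (a, b) y) *
        (∑ a', conj (u a' j') * K k (a', b) y')
      = (if y = y' then (1:ℂ) else 0) * (if j = j' then (p j : ℂ) else 0) := by
    intro j j' y y'
    have expand : ∀ (k : Fin N) (b : Fin dB),
        conj (∑ a, conj (u a j) * K k (a, b) y) * (∑ a', conj (u a' j') * K k (a', b) y')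
        = ∑ a, ∑ a', (u a j * conj (u a' j')) * (K k (a', b) y' * conj (K k (a, b) y)) := by
      intro k b
      rw [map_sum, Finset.sum_mul_sum]
      refine Finset.sum_congr rfl fun a _ => Finset.sum_congr rfl fun a' _ => ?_
      simp only [_root_.map_mul, Complex.conj_conj]
      ring
    calc ∑ k, ∑ b, conj (∑ a, conj (u a j) * K k (a, b) y) *
            (∑ a', conj (u a' j') * K k (a', b) y')
        = ∑ a, ∑ a', ∑ k, ∑ b, (u a j * conj (u a' j')) *
            (K k (a', b) y' * conj (K k (a, b) y)) := by
          simp_rw [expand]; exact swap4 _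
      _ = ∑ a, ∑ a', (u a j * conj (u a' j')) *
            ((if y' = y then (1:ℂ) else 0) * ∑ l, (p l : ℂ) * u a' l * conj (u a l)) := by
          refine Finset.sum_congr rfl fun a _ => Finset.sum_congr rfl fun a' _ => ?_
          rw [← hkey a' a y' y, Finset.mul_sum]
          exact Finset.sum_congr rfl fun k _ => (Finset.mul_sum _ _ _).symm
      _ = (if y = y' then (1:ℂ) else 0) * (if j = j' then (p j : ℂ) else 0) := by
          by_cases hY : y' = y
          · subst hY
            simp only [eq_self_iff_true, if_true, one_mul]
            calc ∑ a, ∑ a', (u a j * conj (u a' j')) *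
                    (∑ l, (p l : ℂ) * u a' l * conj (u a l))
                = ∑ a, u a j * ∑ l, (p l : ℂ) * conj (u a l) *
                    (∑ a', conj (u a' j') * u a' l) := by
                  refine Finset.sum_congr rfl fun a _ => ?_
                  simp only [Finset.mul_sum]
                  rw [Finset.sum_comm]
                  refine Finset.sum_congr rfl fun l _ => Finset.sum_congr rfl fun a' _ => ?_
                  ring
              _ = ∑ a, u a j * ∑ l, (p l : ℂ) * conj (u a l) *
                    (if j' = l then (1:ℂ) else 0) := by
                  simp_rw [hcol]
              _ = ∑ a, u a j * ((p j' : ℂ) * conj (u a j')) := by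
                  refine Finset.sum_congr rfl fun a _ => ?_
                  congr 1
                  simp [mul_ite, mul_one, mul_zero, Finset.sum_ite_eq]
              _ = (p j' : ℂ) * ∑ a, conj (u a j') * u a j := by
                  rw [Finset.mul_sum]
                  refine Finset.sum_congr rfl fun a _ => ?_
                  ring
              _ = (p j' : ℂ) * (if j' = j then (1:ℂ) else 0) := by rw [hcol]
              _ = if j = j' then (p j : ℂ) else 0 := by
                  by_cases hj : j = j'
                  · subst hj; simp
                  · rw [if_neg (fun h => hj h.symm), if_neg hj, mul_zero]
          · have hY' : ¬ (y = y') := fun h => hY h.symm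
            simp [hY, hY']
  -- the kernel-projection vanishing lemma
  set Q : Fin dA → Fin dA → ℂ := fun a c => ∑ j, E0 j * u a j * conj (u c j) with hQdef
  have hQQ : ∀ a₂ a₃ : Fin dA, ∑ a, Q a a₂ * conj (Q a a₃)
      = ∑ j, E0 j * conj (u a₂ j) * u a₃ j := by
    intro a₂ a₃
    have expand : ∀ a : Fin dA, Q a a₂ * conj (Q a a₃)
        = ∑ j, ∑ j', (E0 j * conj (u a₂ j) * (E0 j' * u a₃ j')) *
            (conj (u a j') * u a j) := by
      intro a
      simp only [hQdef, map_sum, _root_.map_mul, Complex.conj_conj, hE0conj]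
      rw [Finset.sum_mul_sum]
      refine Finset.sum_congr rfl fun j _ => Finset.sum_congr rfl fun j' _ => by ring
    calc ∑ a, Q a a₂ * conj (Q a a₃)
        = ∑ j, ∑ j', ∑ a, (E0 j * conj (u a₂ j) * (E0 j' * u a₃ j')) *
            (conj (u a j') * u a j) := by
          simp_rw [expand]; exact swap3 _
      _ = ∑ j, ∑ j', (E0 j * conj (u a₂ j) * (E0 j' * u a₃ j')) *
            (if j' = j then (1:ℂ) else 0) := by
          refine Finset.sum_congr rfl fun j _ => Finset.sum_congr rfl fun j' _ => ?_
          rw [← Finset.mul_sum, hcol]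
      _ = ∑ j, E0 j * conj (u a₂ j) * u a₃ j := by
          refine Finset.sum_congr rfl fun j _ => ?_
          simp only [mul_ite, mul_one, mul_zero, Finset.sum_ite_eq', Finset.mem_univ, if_true]
          calc E0 j * conj (u a₂ j) * (E0 j * u a₃ j)
              = (E0 j * E0 j) * conj (u a₂ j) * u a₃ j := by ring
            _ = E0 j * conj (u a₂ j) * u a₃ j := by rw [hE0sq j]
  have hw0 : ∀ (k : Fin N) (a : Fin dA) (b : Fin dB) (y : Fin dY),
      ∑ a₂, (∑ j, E0 j * u a j * conj (u a₂ j)) * K k (a₂, b) y = 0 := by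
    have hC : ∀ y : Fin dY, ∑ k, ∑ a, ∑ b,
        (∑ a₂, Q a a₂ * K k (a₂, b) y) * conj (∑ a₂, Q a a₂ * K k (a₂, b) y) = 0 := by
      intro y
      have expand : ∀ (k : Fin N) (a : Fin dA) (b : Fin dB),
          (∑ a₂, Q a a₂ * K k (a₂, b) y) * conj (∑ a₂, Q a a₂ * K k (a₂, b) y)
          = ∑ a₂, ∑ a₃, (Q a a₂ * conj (Q a a₃)) * (K k (a₂, b) y * conj (K k (a₃, b) y)) := by
        intro k a b
        rw [map_sum, Finset.sum_mul_sum]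
        refine Finset.sum_congr rfl fun a₂ _ => Finset.sum_congr rfl fun a₃ _ => ?_
        simp only [_root_.map_mul]
        ring
      calc ∑ k, ∑ a, ∑ b,
            (∑ a₂, Q a a₂ * K k (a₂, b) y) * conj (∑ a₂, Q a a₂ * K k (a₂, b) y)
          = ∑ a, ∑ k, ∑ b, ∑ a₂, ∑ a₃,
              (Q a a₂ * conj (Q a a₃)) * (K k (a₂, b) y * conj (K k (a₃, b) y)) := by
            simp_rw [expand]
            rw [Finset.sum_comm]
        _ = ∑ a, ∑ a₂, ∑ a₃, (Q a a₂ * conj (Q a a₃)) *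
              (∑ k, ∑ b, K k (a₂, b) y * conj (K k (a₃, b) y)) := by
            refine Finset.sum_congr rfl fun a _ => ?_
            rw [swap4]
            refine Finset.sum_congr rfl fun a₂ _ => Finset.sum_congr rfl fun a₃ _ => ?_
            rw [Finset.mul_sum]
            exact Finset.sum_congr rfl fun k _ => (Finset.mul_sum _ _ _).symm
        _ = ∑ a₂, ∑ a₃, (∑ a, Q a a₂ * conj (Q a a₃)) *
              (∑ l, (p l : ℂ) * u a₂ l * conj (u a₃ l)) := by
            rw [swap3]
            refine Finset.sum_congr rfl fun a₂ _ => Finset.sum_congr rfl fun a₃ _ => ?_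
            rw [hkey a₂ a₃ y y, if_pos rfl, one_mul, ← Finset.sum_mul]
        _ = ∑ a₂, ∑ a₃, (∑ j, E0 j * conj (u a₂ j) * u a₃ j) *
              (∑ l, (p l : ℂ) * u a₂ l * conj (u a₃ l)) := by
            simp_rw [hQQ]
        _ = 0 := by
            refine Finset.sum_eq_zero fun a₂ _ => ?_
            have inner : ∀ a₃ : Fin dA,
                (∑ j, E0 j * conj (u a₂ j) * u a₃ j) *
                  (∑ l, (p l : ℂ) * u a₂ l * conj (u a₃ l))
                = ∑ j, ∑ l, (E0 j * conj (u a₂ j) * ((p l : ℂ) * u a₂ l)) *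
                    (u a₃ j * conj (u a₃ l)) := by
              intro a₃
              rw [Finset.sum_mul_sum]
              refine Finset.sum_congr rfl fun j _ => Finset.sum_congr rfl fun l _ => by ring
            calc ∑ a₃, (∑ j, E0 j * conj (u a₂ j) * u a₃ j) *
                    (∑ l, (p l : ℂ) * u a₂ l * conj (u a₃ l))
                = ∑ j, ∑ l, (E0 j * conj (u a₂ j) * ((p l : ℂ) * u a₂ l)) *
                    (∑ a₃, conj (u a₃ l) * u a₃ j) := by
                  simp_rw [inner]
                  rw [swap3]
                  refine Finset.sum_congr rfl fun j _ => Finset.sum_congr rfl fun l _ => ?_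
                  rw [← Finset.mul_sum]
                  congr 1
                  exact Finset.sum_congr rfl fun a₃ _ => mul_comm _ _
              _ = ∑ j, ∑ l, (E0 j * conj (u a₂ j) * ((p l : ℂ) * u a₂ l)) *
                    (if l = j then (1:ℂ) else 0) := by simp_rw [hcol]
              _ = 0 := by
                  refine Finset.sum_eq_zero fun j _ => ?_
                  simp only [mul_ite, mul_one, mul_zero, Finset.sum_ite_eq',
                    Finset.mem_univ, if_true]
                  calc E0 j * conj (u a₂ j) * ((p j : ℂ) * u a₂ j)
                      = (E0 j * (p j : ℂ)) * (conj (u a₂ j) * u a₂ j) := by ring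
                    _ = 0 := by rw [hE0p j, zero_mul]
    intro k a b y
    have hreal : ∑ k, ∑ a, ∑ b,
        Complex.normSq (∑ a₂, Q a a₂ * K k (a₂, b) y) = 0 := by
      have := hC y
      simp_rw [Complex.mul_conj] at this
      exact_mod_cast this
    have h1 := (Finset.sum_eq_zero_iff_of_nonneg
      (fun i _ => Finset.sum_nonneg fun a _ => Finset.sum_nonneg fun b _ =>
        Complex.normSq_nonneg _)).mp hreal k (Finset.mem_univ k)
    have h2 := (Finset.sum_eq_zero_iff_of_nonneg
      (fun a _ => Finset.sum_nonneg fun b _ => Complex.normSq_nonneg _)).mp h1 a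
        (Finset.mem_univ a)
    have h3 := (Finset.sum_eq_zero_iff_of_nonneg
      (fun b _ => Complex.normSq_nonneg _)).mp h2 b (Finset.mem_univ b)
    have h4 := Complex.normSq_eq_zero.mp h3
    simpa only [hQdef] using h4
  -- the two Kraus identities
  have hGl : ∀ k : Fin N,
      ((1 : Matrix (Fin dA) (Fin dA) ℂ) ⊗ₖ L0 (Sum.inl k)) * W = K k := by
    intro k
    ext x y
    obtain ⟨a, b⟩ := x
    rw [hcollapse]
    have hstep : ∀ j : Fin dA, ψ (a, j) * L0 (Sum.inl k) b (j, y)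
        = (u a j * ∑ a₂, conj (u a₂ j) * K k (a₂, b) y)
          - E0 j * (u a j * ∑ a₂, conj (u a₂ j) * K k (a₂, b) y) := by
      intro j
      have h1 : ψ (a, j) * L0 (Sum.inl k) b (j, y)
          = ((Real.sqrt (p j) : ℂ) * q j) * (u a j * ∑ a₂, conj (u a₂ j) * K k (a₂, b) y) := by
        simp only [hψ, hL0, Sum.elim_inl, hLA, Matrix.of_apply]
        ring
      rw [h1, hsq j]
      simp only [hE0]
      split_ifs <;> ring
    rw [Finset.sum_congr rfl fun j _ => hstep j, Finset.sum_sub_distrib]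
    have h2 : ∑ j, u a j * ∑ a₂, conj (u a₂ j) * K k (a₂, b) y = K k (a, b) y := by
      calc ∑ j, u a j * ∑ a₂, conj (u a₂ j) * K k (a₂, b) y
          = ∑ a₂, (∑ j, u a j * conj (u a₂ j)) * K k (a₂, b) y := by
            simp only [Finset.mul_sum, Finset.sum_mul]
            rw [Finset.sum_comm]
            refine Finset.sum_congr rfl fun a₂ _ => Finset.sum_congr rfl fun j _ => by ring
        _ = ∑ a₂, (if a = a₂ then (1:ℂ) else 0) * K k (a₂, b) y := by simp_rw [hrow]
        _ = K k (a, b) y := by simp [ite_mul, Finset.sum_ite_eq]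
    have h3 : ∑ j, E0 j * (u a j * ∑ a₂, conj (u a₂ j) * K k (a₂, b) y)
        = ∑ a₂, (∑ j, E0 j * u a j * conj (u a₂ j)) * K k (a₂, b) y := by
      simp only [Finset.mul_sum, Finset.sum_mul]
      rw [Finset.sum_comm]
      refine Finset.sum_congr rfl fun a₂ _ => Finset.sum_congr rfl fun j _ => by ring
    rw [h2, h3, hw0 k a b y, sub_zero]
  have hGr : ∀ t : Fin (dA * dY),
      ((1 : Matrix (Fin dA) (Fin dA) ℂ) ⊗ₖ L0 (Sum.inr t)) * W = 0 := by
    intro t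
    ext x y
    obtain ⟨a, b⟩ := x
    rw [hcollapse]
    simp only [Matrix.zero_apply]
    refine Finset.sum_eq_zero fun j _ => ?_
    simp only [hL0, Sum.elim_inr, hLB, Matrix.of_apply]
    split_ifs with h
    · simp only [hψ]
      rw [h.1]
      simp
    · rw [mul_zero]
  -- trace preservation
  have hKsum : ∑ c : Fin N ⊕ Fin (dA * dY), (L0 c)ᴴ * L0 c = 1 := by
    rw [Fintype.sum_sum_type]
    ext x x'
    obtain ⟨j, y⟩ := x
    obtain ⟨j', y'⟩ := x'
    simp only [Matrix.add_apply, Matrix.sum_apply, Matrix.mul_apply,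
      Matrix.conjTranspose_apply, RCLike.star_def, hL0, Sum.elim_inl, Sum.elim_inr]
    have h1 : ∑ k, ∑ b, conj (LA k b (j, y)) * LA k b (j', y')
        = q j * q j' * ((if y = y' then (1:ℂ) else 0) * (if j = j' then (p j : ℂ) else 0)) := by
      calc ∑ k, ∑ b, conj (LA k b (j, y)) * LA k b (j', y')
          = ∑ k, ∑ b, (q j * q j') * (conj (∑ a, conj (u a j) * K k (a, b) y) *
              (∑ a', conj (u a' j') * K k (a', b) y')) := by
            refine Finset.sum_congr rfl fun k _ => Finset.sum_congr rfl fun b _ => ?_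
            simp only [hLA, Matrix.of_apply, _root_.map_mul, hqconj]
            ring
        _ = (q j * q j') * ∑ k, ∑ b, conj (∑ a, conj (u a j) * K k (a, b) y) *
              (∑ a', conj (u a' j') * K k (a', b) y') := by
            rw [Finset.mul_sum]
            exact Finset.sum_congr rfl fun k _ => (Finset.mul_sum _ _ _).symm
        _ = q j * q j' * ((if y = y' then (1:ℂ) else 0) *
              (if j = j' then (p j : ℂ) else 0)) := by rw [hT j j' y y']
    have h2 : ∑ t, ∑ b, conj (LB t b (j, y)) * LB t b (j', y')
        = if p j = 0 ∧ j = j' ∧ y = y' then (1:ℂ) else 0 := by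
      by_cases hcase : p j = 0 ∧ j = j' ∧ y = y'
      · obtain ⟨h0, rfl, rfl⟩ := hcase
        rw [if_pos ⟨h0, rfl, rfl⟩]
        calc ∑ t, ∑ b, conj (LB t b (j, y)) * LB t b (j, y)
            = ∑ t, ∑ b, (if b = (⟨0, hdB⟩ : Fin dB) ∧ t = finProdFinEquiv (j, y)
                then (1:ℂ) else 0) := by
              refine Finset.sum_congr rfl fun t _ => Finset.sum_congr rfl fun b _ => ?_
              simp only [hLB, Matrix.of_apply, h0, true_and]
              split_ifs with h
              · simp
              · simp
          _ = 1 := by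
              rw [Finset.sum_comm]
              simp only [ite_and, Finset.sum_ite_irrel, Finset.sum_const_zero,
                Finset.sum_ite_eq', Finset.mem_univ, if_true]
      · rw [if_neg hcase]
        refine Finset.sum_eq_zero fun t _ => Finset.sum_eq_zero fun b _ => ?_
        simp only [hLB, Matrix.of_apply]
        split_ifs with hA hB hB
        · exfalso
          obtain ⟨e1, e2, e3⟩ := hA
          obtain ⟨f1, f2, f3⟩ := hB
          have := finProdFinEquiv.injective (e3 ▸ f3 : finProdFinEquiv (j, y) = finProdFinEquiv (j', y'))
          rw [Prod.mk.injEq] at this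
          exact hcase ⟨e1, this.1, this.2⟩
        · simp
        · simp
        · simp
    rw [h1, h2, Matrix.one_apply]
    by_cases hjj : j = j'
    · subst hjj
      by_cases hyy : y = y'
      · subst hyy
        simp only [eq_self_iff_true, if_true, true_and, and_true, one_mul, Prod.mk.injEq]
        by_cases hp0 : p j = 0
        · simp [hq, hp0]
        · rw [if_neg hp0, add_zero]
          exact hqq j hp0
      · simp [hyy, Prod.ext_iff]
    · simp [hjj, Prod.ext_iff]
  -- assemble
  refine ⟨χ, hχpsd, hχtr, N + dA * dY, fun i => L0 (finSumFinEquiv.symm i), ?_, ?_⟩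
  · rw [← hKsum]
    exact Equiv.sum_comp finSumFinEquiv.symm fun c => (L0 c)ᴴ * L0 c
  · intro ρ
    have hcalc : ∀ c : Fin N ⊕ Fin (dA * dY),
        ((1 : Matrix (Fin dA) (Fin dA) ℂ) ⊗ₖ L0 c) *
          (Matrix.reindex (Equiv.prodAssoc (Fin dA) (Fin dA) (Fin dY))
            (Equiv.prodAssoc (Fin dA) (Fin dA) (Fin dY)) (χ ⊗ₖ ρ)) *
          ((1 : Matrix (Fin dA) (Fin dA) ℂ) ⊗ₖ L0 c)ᴴ
        = (((1 : Matrix (Fin dA) (Fin dA) ℂ) ⊗ₖ L0 c) * W) * ρ *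
            ((((1 : Matrix (Fin dA) (Fin dA) ℂ) ⊗ₖ L0 c) * W))ᴴ := by
      intro c
      rw [hW ρ, Matrix.conjTranspose_mul]
      simp only [Matrix.mul_assoc]
    calc (∑ k, K k * ρ * (K k)ᴴ)
        = ∑ c : Fin N ⊕ Fin (dA * dY),
            (((1 : Matrix (Fin dA) (Fin dA) ℂ) ⊗ₖ L0 c) * W) * ρ *
              ((((1 : Matrix (Fin dA) (Fin dA) ℂ) ⊗ₖ L0 c) * W))ᴴ := by
          rw [Fintype.sum_sum_type]
          have hinr : ∑ t : Fin (dA * dY),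
              (((1 : Matrix (Fin dA) (Fin dA) ℂ) ⊗ₖ L0 (Sum.inr t)) * W) * ρ *
                ((((1 : Matrix (Fin dA) (Fin dA) ℂ) ⊗ₖ L0 (Sum.inr t)) * W))ᴴ = 0 := by
            refine Finset.sum_eq_zero fun t _ => ?_
            rw [hGr t]
            simp
          rw [hinr, add_zero]
          refine Finset.sum_congr rfl fun k _ => ?_
          rw [hGl k]
      _ = ∑ c : Fin N ⊕ Fin (dA * dY),
            ((1 : Matrix (Fin dA) (Fin dA) ℂ) ⊗ₖ L0 c) *
              (Matrix.reindex (Equiv.prodAssoc (Fin dA) (Fin dA) (Fin dY))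
                (Equiv.prodAssoc (Fin dA) (Fin dA) (Fin dY)) (χ ⊗ₖ ρ)) *
              ((1 : Matrix (Fin dA) (Fin dA) ℂ) ⊗ₖ L0 c)ᴴ := by
          exact Finset.sum_congr rfl fun c _ => (hcalc c).symm
      _ = ∑ i : Fin (N + dA * dY),
            ((1 : Matrix (Fin dA) (Fin dA) ℂ) ⊗ₖ L0 (finSumFinEquiv.symm i)) *
              (Matrix.reindex (Equiv.prodAssoc (Fin dA) (Fin dA) (Fin dY))
                (Equiv.prodAssoc (Fin dA) (Fin dA) (Fin dY)) (χ ⊗ₖ ρ)) *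
              ((1 : Matrix (Fin dA) (Fin dA) ℂ) ⊗ₖ L0 (finSumFinEquiv.symm i))ᴴ := by
          exact (Equiv.sum_comp finSumFinEquiv.symm _).symm

/-- a bipartite CPTP map `E : M_{dY}(ℂ) → M_{dA·dB}(ℂ)` (trivial Alice
input) that is nonsignaling from Bob to Alice, i.e. `Tr₂[E(ρ)] = Tr(ρ)·σ_A` for a fixed
density matrix `σ_A`, is semilocalizable: `E(ρ) = (id_{dA} ⊗ Φ)(χ ⊗ ρ)` for some `m ≥ 1`,
density matrix `χ` on `ℂ^{dA} ⊗ ℂᵐ` and CPTP map `Φ : M_{m·dY}(ℂ) → M_{dB}(ℂ)` (given here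
by its Kraus operators `K_i`, so that `id_{dA} ⊗ Φ` has Kraus operators `I_{dA} ⊗ K_i`;
`χ ⊗ ρ` on `(ℂ^{dA} ⊗ ℂᵐ) ⊗ ℂ^{dY}` is reassociated to `ℂ^{dA} ⊗ (ℂᵐ ⊗ ℂ^{dY})`). -/
theorem stmt_12 (dA dB dY : ℕ)
    (E : Matrix (Fin dY) (Fin dY) ℂ → Matrix (Fin dA × Fin dB) (Fin dA × Fin dB) ℂ)
    (hE : IsCPTP E)
    (σA : Matrix (Fin dA) (Fin dA) ℂ) (hσ : σA.PosSemidef) (hσtr : σA.trace = 1)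
    (hmarg : ∀ ρ, ptrace2 (E ρ) = ρ.trace • σA) :
    ∃ m : ℕ, 1 ≤ m ∧
      ∃ χ : Matrix (Fin dA × Fin m) (Fin dA × Fin m) ℂ, χ.PosSemidef ∧ χ.trace = 1 ∧
        ∃ (N : ℕ) (K : Fin N → Matrix (Fin dB) (Fin m × Fin dY) ℂ),
          (∑ i, (K i)ᴴ * K i = 1) ∧
          ∀ ρ, E ρ = ∑ i,
            ((1 : Matrix (Fin dA) (Fin dA) ℂ) ⊗ₖ K i) *
              (Matrix.reindex (Equiv.prodAssoc (Fin dA) (Fin m) (Fin dY))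
                (Equiv.prodAssoc (Fin dA) (Fin m) (Fin dY)) (χ ⊗ₖ ρ)) *
              ((1 : Matrix (Fin dA) (Fin dA) ℂ) ⊗ₖ K i)ᴴ := by
  classical
  obtain ⟨N, K, hKr, hKsum⟩ := hE
  rcases Nat.eq_zero_or_pos dA with hdA0 | hdA
  · exfalso
    subst hdA0
    simp [Matrix.trace] at hσtr
  rcases Nat.eq_zero_or_pos dY with hdY0 | hdY
  · subst hdY0
    refine ⟨1, le_refl 1,
      Matrix.of fun x y => (if x = ((⟨0, hdA⟩ : Fin dA), (0 : Fin 1)) then (1:ℂ) else 0) *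
        conj (if y = ((⟨0, hdA⟩ : Fin dA), (0 : Fin 1)) then (1:ℂ) else 0),
      outer_psd _, ?_, 0, Fin.elim0, ?_, ?_⟩
    · rw [Matrix.trace, Fintype.sum_prod_type]
      simp [Matrix.diag, apply_ite (starRingEnd ℂ), Finset.sum_ite_eq',
        ite_mul, mul_ite, Prod.ext_iff]
    · apply Matrix.ext
      intro i j
      exact (i.2).elim0
    · intro ρ
      have hρ : ρ = 0 := by
        apply Matrix.ext
        intro i j
        exact i.elim0
      simp [hKr, hρ]
  rcases Nat.eq_zero_or_pos dB with hdB0 | hdB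
  · exfalso
    subst hdB0
    have h := hmarg 1
    have h0 : ptrace2 (E (1 : Matrix (Fin dY) (Fin dY) ℂ)) = 0 := by
      apply Matrix.ext
      intro a a'
      simp [ptrace2]
    rw [h0, Matrix.trace_one] at h
    have hne : ((Fintype.card (Fin dY) : ℂ)) ≠ 0 := by
      simp only [Fintype.card_fin]
      exact_mod_cast hdY.ne'
    have hσ0 : σA = 0 := by
      rcases smul_eq_zero.mp h.symm with h' | h'
      · exact absurd h' hne
      · exact h'
    rw [hσ0] at hσtr
    simp at hσtr
  -- main case
  have hH : σA.IsHermitian := hσ.1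
  set u : Matrix (Fin dA) (Fin dA) ℂ := (hH.eigenvectorUnitary : Matrix (Fin dA) (Fin dA) ℂ)
    with hu
  set p : Fin dA → ℝ := hH.eigenvalues with hpdef
  have hp : ∀ j, 0 ≤ p j := fun j => hσ.eigenvalues_nonneg j
  have hcol : ∀ j j', ∑ a, conj (u a j) * u a j' = if j = j' then (1:ℂ) else 0 := by
    intro j j'
    have h3 : ((star (hH.eigenvectorUnitary : Matrix (Fin dA) (Fin dA) ℂ)) *
        (hH.eigenvectorUnitary : Matrix (Fin dA) (Fin dA) ℂ)) j j'
        = (1 : Matrix (Fin dA) (Fin dA) ℂ) j j' := by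
      exact_mod_cast congrFun (congrFun (Unitary.coe_star_mul_self hH.eigenvectorUnitary) j) j'
    rw [Matrix.mul_apply] at h3
    simp only [Matrix.star_apply, RCLike.star_def] at h3
    rw [← hu] at h3
    rw [h3, Matrix.one_apply]
  have hrow : ∀ a a', ∑ j, u a j * conj (u a' j) = if a = a' then (1:ℂ) else 0 := by
    intro a a'
    have h3 : ((hH.eigenvectorUnitary : Matrix (Fin dA) (Fin dA) ℂ) *
        (star (hH.eigenvectorUnitary : Matrix (Fin dA) (Fin dA) ℂ))) a a'
        = (1 : Matrix (Fin dA) (Fin dA) ℂ) a a' := by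
      exact_mod_cast congrFun (congrFun (Unitary.coe_mul_star_self hH.eigenvectorUnitary) a) a'
    rw [Matrix.mul_apply] at h3
    simp only [Matrix.star_apply, RCLike.star_def] at h3
    rw [← hu] at h3
    rw [h3, Matrix.one_apply]
  have hspec : ∀ a a', σA a a' = ∑ j, (p j : ℂ) * u a j * conj (u a' j) := by
    intro a a'
    conv_lhs => rw [hH.spectral_theorem, Unitary.conjStarAlgAut_apply]
    rw [Matrix.mul_apply]
    refine Finset.sum_congr rfl fun j _ => ?_
    rw [Matrix.mul_apply]
    simp only [Matrix.diagonal_apply, Function.comp_apply, Matrix.star_apply, RCLike.star_def]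
    simp only [mul_ite, mul_zero, Finset.sum_ite_eq', Finset.mem_univ, if_true,
      Complex.coe_algebraMap, RCLike.ofReal_alg, Complex.real_smul, mul_one, ← hu, ← hpdef]
    ring
  have hptr : ∑ j, p j = 1 := by
    have h1 : σA.trace = ∑ j, (p j : ℂ) := by
      rw [Matrix.trace]
      calc ∑ a, σA.diag a
          = ∑ a, ∑ j, (p j : ℂ) * u a j * conj (u a j) :=
            Finset.sum_congr rfl fun a _ => hspec a a
        _ = ∑ j, (p j : ℂ) * ∑ a, conj (u a j) * u a j := by
            rw [Finset.sum_comm]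
            refine Finset.sum_congr rfl fun j _ => ?_
            rw [Finset.mul_sum]
            exact Finset.sum_congr rfl fun a _ => by ring
        _ = ∑ j, (p j : ℂ) := by
            refine Finset.sum_congr rfl fun j _ => ?_
            rw [hcol j j, if_pos rfl, mul_one]
    rw [h1] at hσtr
    exact_mod_cast hσtr
  have hkey : ∀ a a' y y', ∑ k, ∑ b, K k (a, b) y * conj (K k (a', b) y')
      = (if y = y' then (1:ℂ) else 0) * ∑ j, (p j : ℂ) * u a j * conj (u a' j) := by
    intro a a' y y'
    have h2 := congrFun (congrFun (hmarg (Matrix.single y y' 1)) a) a'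
    have hL : ptrace2 (E (Matrix.single y y' 1)) a a'
        = ∑ k, ∑ b, K k (a, b) y * conj (K k (a', b) y') := by
      show (Matrix.of fun i j => ∑ l, (E (Matrix.single y y' 1)) (i, l) (j, l)) a a' = _
      simp only [Matrix.of_apply]
      rw [hKr]
      simp only [Matrix.sum_apply]
      rw [Finset.sum_comm]
      refine Finset.sum_congr rfl fun k _ => Finset.sum_congr rfl fun b _ => ?_
      simp only [Matrix.mul_apply, Matrix.conjTranspose_apply, Matrix.single,
        Matrix.of_apply, mul_ite, mul_one, mul_zero, ite_and, Finset.sum_ite_irrel,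
        Finset.sum_const_zero, Finset.sum_ite_eq, Finset.sum_ite_eq', Finset.mem_univ,
        if_true, ite_mul, zero_mul, RCLike.star_def]
    have hR : (Matrix.single y y' (1:ℂ)).trace = if y = y' then (1:ℂ) else 0 := by
      by_cases hyy : y = y'
      · subst hyy
        rw [if_pos rfl]
        exact Matrix.trace_single_eq_same y _
      · rw [if_neg hyy]
        exact Matrix.trace_single_eq_of_ne y y' _ hyy
    rw [hL, Matrix.smul_apply, hR, smul_eq_mul, hspec a a'] at h2
    exact h2
  obtain ⟨χ, hχ1, hχ2, N', L, hL1, hL2⟩ :=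
    construction dA dB dY N hdB p u K hp hptr hcol hrow hkey
  exact ⟨dA, hdA, χ, hχ1, hχ2, N', L, hL1, fun ρ => by rw [hKr]; exact hL2 ρ⟩
end

section
/- Eigenstate criterion for LOSE-free channels: let E : M_{d_A·d_B}(ℂ) → M_{d_A·d_B}(ℂ) be localizable, i.e., there exist p, q ≥ 1, a density matrix σ on ℂᵖ ⊗ ℂ^q, and finite Kraus families K_i (matrices of size d_A × d_A·p, with Σ_i K_i† K_i = I_{d_A·p}) and L_j (matrices of size d_B × d_B·q, with Σ_j L_j† L_j = I_{d_B·q}) such that E(ρ) = Σ_{i,j} (K_i ⊗ L_j) P (ρ ⊗ σ) P† (K_i ⊗ L_j)† for all ρ, where P is the permutation matrix reordering the tensor factors ℂ^{d_A} ⊗ ℂ^{d_B} ⊗ ℂᵖ ⊗ ℂ^q into (ℂ^{d_A} ⊗ ℂᵖ) ⊗ (ℂ^{d_B} ⊗ ℂ^q). Let ψ ∈ ℂ^{d_A} ⊗ ℂ^{d_B} be a unit vector with E(ψψ†) = ψψ†, let A be an invertible d_A×d_A matrix and B an invertible d_B×d_B matrix, and suppose that the normalized vectors ψ_A = (A ⊗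 I)ψ/‖(A ⊗ I)ψ‖ and ψ_B = (I ⊗ B)ψ/‖(I ⊗ B)ψ‖ also satisfy E(ψ_A ψ_A†) = ψ_A ψ_A† and E(ψ_B ψ_B†) = ψ_B ψ_B†. Then the normalized vector ψ_{AB} = (A ⊗ B)ψ/‖(A ⊗ B)ψ‖ satisfies E(ψ_{AB} ψ_{AB}†) = ψ_{AB} ψ_{AB}†. -/
open Matrix Kronecker ComplexOrder

/-- Normalization of a vector: `v / ‖v‖`, where `‖v‖ = √(⟨v,v⟩)` for the standard inner
product on `ℂ^ι`. -/
noncomputable def normVec {ι : Type*} [Fintype ι] (v : ι → ℂ) : ι → ℂ :=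
  (((Real.sqrt (star v ⬝ᵥ v).re : ℝ) : ℂ))⁻¹ • v

namespace Stmt14

lemma star_dot_self {ι : Type*} [Fintype ι] (v : ι → ℂ) :
    star v ⬝ᵥ v = ((∑ k, Complex.normSq (v k) : ℝ) : ℂ) := by
  simp only [dotProduct, Pi.star_apply, Complex.ofReal_sum]
  refine Finset.sum_congr rfl fun k _ => ?_
  rw [RCLike.star_def, mul_comm, Complex.mul_conj]

lemma sum_normSq_pos {ι : Type*} [Fintype ι] {v : ι → ℂ} (hv : v ≠ 0) :
    0 < ∑ k, Complex.normSq (v k) := by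
  obtain ⟨k, hk⟩ : ∃ k, v k ≠ 0 := by
    by_contra h; push_neg at h; exact hv (funext h)
  exact Finset.sum_pos' (fun i _ => Complex.normSq_nonneg _)
    ⟨k, Finset.mem_univ _, Complex.normSq_pos.mpr hk⟩

lemma normVec_eq_smul {ι : Type*} [Fintype ι] (v : ι → ℂ) :
    normVec v = (((Real.sqrt (star v ⬝ᵥ v).re : ℝ) : ℂ))⁻¹ • v := rfl

lemma normVec_coeff_ne_zero {ι : Type*} [Fintype ι] {v : ι → ℂ} (hv : v ≠ 0) :
    (((Real.sqrt (star v ⬝ᵥ v).re : ℝ) : ℂ))⁻¹ ≠ 0 := by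
  have h1 : (star v ⬝ᵥ v).re = ∑ k, Complex.normSq (v k) := by
    rw [star_dot_self]; simp
  rw [h1]
  have := sum_normSq_pos hv
  simp only [ne_eq, inv_eq_zero, Complex.ofReal_eq_zero]
  positivity

lemma normVec_unit {ι : Type*} [Fintype ι] {v : ι → ℂ} (hv : v ≠ 0) :
    star (normVec v) ⬝ᵥ normVec v = 1 := by
  have h1 : (star v ⬝ᵥ v).re = ∑ k, Complex.normSq (v k) := by
    rw [star_dot_self]; simp
  have hpos := sum_normSq_pos hv
  rw [normVec_eq_smul, star_smul, smul_dotProduct, dotProduct_smul, h1, star_dot_self]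
  set n : ℝ := ∑ k, Complex.normSq (v k)
  have hs : star ((((Real.sqrt n : ℝ)) : ℂ))⁻¹ = (((Real.sqrt n : ℝ) : ℂ))⁻¹ := by
    rw [star_inv₀, Complex.star_def, Complex.conj_ofReal]
  rw [hs, smul_eq_mul, smul_eq_mul]
  have h2 : ((Real.sqrt n : ℝ) : ℂ) * ((Real.sqrt n : ℝ) : ℂ) = (n : ℂ) := by
    rw [← Complex.ofReal_mul, Real.mul_self_sqrt hpos.le]
  field_simp
  rw [sq, h2]

end Stmt14

namespace Stmt14X
open Complex

lemma colmult {n m : Type*} [Fintype n] [Fintype m] (φ : n → ℂ)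
    (hφ : star φ ⬝ᵥ φ = 1) (c : m → n → ℂ)
    (h : ∀ k k', (∑ t, c t k * (starRingEnd ℂ) (c t k')) = φ k * (starRingEnd ℂ) (φ k')) :
    ∀ t k, c t k = (∑ k', (starRingEnd ℂ) (φ k') * c t k') * φ k := by
  have hφ1 : (∑ k, (starRingEnd ℂ) (φ k) * φ k) = 1 := by
    simpa [dotProduct, Complex.star_def] using hφ
  have hφ2 : (∑ k, φ k * (starRingEnd ℂ) (φ k)) = 1 := by
    simpa [mul_comm] using hφ1
  set t' : m → ℂ := fun t => ∑ k', (starRingEnd ℂ) (φ k') * c t k' with ht'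
  have hconj_t' : ∀ t, (starRingEnd ℂ) (t' t) = ∑ k, φ k * (starRingEnd ℂ) (c t k) := by
    intro t
    rw [ht']
    simp only [map_sum, _root_.map_mul, Complex.conj_conj]
  have key2 : ∀ k, (∑ t, c t k * (starRingEnd ℂ) (t' t)) = φ k := by
    intro k
    calc ∑ t, c t k * (starRingEnd ℂ) (t' t)
        = ∑ t, ∑ k', φ k' * (c t k * (starRingEnd ℂ) (c t k')) := by
          refine Finset.sum_congr rfl fun t _ => ?_
          rw [hconj_t' t, Finset.mul_sum]
          exact Finset.sum_congr rfl fun k' _ => by ring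
      _ = ∑ k', φ k' * (φ k * (starRingEnd ℂ) (φ k')) := by
          rw [Finset.sum_comm]
          refine Finset.sum_congr rfl fun k' _ => ?_
          rw [← Finset.mul_sum, h k k']
      _ = φ k * ∑ k', (starRingEnd ℂ) (φ k') * φ k' := by
          rw [Finset.mul_sum]
          exact Finset.sum_congr rfl fun k' _ => by ring
      _ = φ k := by rw [hφ1, mul_one]
  have key3 : (∑ t, t' t * (starRingEnd ℂ) (t' t)) = 1 := by
    calc ∑ t, t' t * (starRingEnd ℂ) (t' t)
        = ∑ t, ∑ k, (starRingEnd ℂ) (φ k) * (c t k * (starRingEnd ℂ) (t' t)) := by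
          refine Finset.sum_congr rfl fun t _ => ?_
          rw [ht']
          simp only [Finset.sum_mul]
          exact Finset.sum_congr rfl fun k _ => by ring
      _ = ∑ k, (starRingEnd ℂ) (φ k) * (∑ t, c t k * (starRingEnd ℂ) (t' t)) := by
          rw [Finset.sum_comm]
          exact Finset.sum_congr rfl fun k _ => by rw [Finset.mul_sum]
      _ = ∑ k, (starRingEnd ℂ) (φ k) * φ k := by
          exact Finset.sum_congr rfl fun k _ => by rw [key2 k]
      _ = 1 := hφ1
  have main : (∑ t, ∑ k, (c t k - t' t * φ k) * (starRingEnd ℂ) (c t k - t' t * φ k)) = 0 := by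
    have expand : ∀ t k, (c t k - t' t * φ k) * (starRingEnd ℂ) (c t k - t' t * φ k)
        = c t k * (starRingEnd ℂ) (c t k)
          - (starRingEnd ℂ) (t' t) * (c t k * (starRingEnd ℂ) (φ k))
          - t' t * (φ k * (starRingEnd ℂ) (c t k))
          + (t' t * (starRingEnd ℂ) (t' t)) * (φ k * (starRingEnd ℂ) (φ k)) := by
      intro t k
      rw [map_sub, _root_.map_mul]
      ring
    have S1 : (∑ t : m, ∑ k, c t k * (starRingEnd ℂ) (c t k)) = 1 := by
      rw [Finset.sum_comm]
      calc ∑ k, ∑ t, c t k * (starRingEnd ℂ) (c t k)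
          = ∑ k, φ k * (starRingEnd ℂ) (φ k) := Finset.sum_congr rfl fun k _ => h k k
        _ = 1 := hφ2
    have S2 : (∑ t : m, ∑ k, (starRingEnd ℂ) (t' t) * (c t k * (starRingEnd ℂ) (φ k))) = 1 := by
      rw [Finset.sum_comm]
      calc ∑ k, ∑ t, (starRingEnd ℂ) (t' t) * (c t k * (starRingEnd ℂ) (φ k))
          = ∑ k, (starRingEnd ℂ) (φ k) * ∑ t, c t k * (starRingEnd ℂ) (t' t) := by
            refine Finset.sum_congr rfl fun k _ => ?_
            rw [Finset.mul_sum]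
            exact Finset.sum_congr rfl fun t _ => by ring
        _ = ∑ k, (starRingEnd ℂ) (φ k) * φ k :=
            Finset.sum_congr rfl fun k _ => by rw [key2 k]
        _ = 1 := hφ1
    have S3 : (∑ t : m, ∑ k, t' t * (φ k * (starRingEnd ℂ) (c t k))) = 1 := by
      calc ∑ t : m, ∑ k, t' t * (φ k * (starRingEnd ℂ) (c t k))
          = ∑ t : m, t' t * (starRingEnd ℂ) (t' t) := by
            refine Finset.sum_congr rfl fun t _ => ?_
            rw [← Finset.mul_sum, ← hconj_t' t]
        _ = 1 := key3
    have S4 : (∑ t : m, ∑ k, (t' t * (starRingEnd ℂ) (t' t)) * (φ k * (starRingEnd ℂ) (φ k)))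
        = 1 := by
      calc ∑ t : m, ∑ k, (t' t * (starRingEnd ℂ) (t' t)) * (φ k * (starRingEnd ℂ) (φ k))
          = ∑ t : m, t' t * (starRingEnd ℂ) (t' t) := by
            refine Finset.sum_congr rfl fun t _ => ?_
            rw [← Finset.mul_sum, hφ2, mul_one]
        _ = 1 := key3
    simp only [expand, Finset.sum_add_distrib, Finset.sum_sub_distrib]
    rw [S1, S2, S3, S4]
    ring
  have mainR : (∑ t, ∑ k, Complex.normSq (c t k - t' t * φ k)) = (0 : ℝ) := by
    have : (((∑ t, ∑ k, Complex.normSq (c t k - t' t * φ k)) : ℝ) : ℂ) = 0 := by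
      rw [← main]
      push_cast
      refine Finset.sum_congr rfl fun t _ => Finset.sum_congr rfl fun k _ => ?_
      rw [Complex.mul_conj]
    exact_mod_cast this
  intro t k
  have h1 : ∀ t ∈ Finset.univ (α := m), (0:ℝ) ≤ ∑ k, Complex.normSq (c t k - t' t * φ k) :=
    fun t _ => Finset.sum_nonneg fun k _ => Complex.normSq_nonneg _
  have h2 := (Finset.sum_eq_zero_iff_of_nonneg h1).mp mainR t (Finset.mem_univ t)
  have h3 := (Finset.sum_eq_zero_iff_of_nonneg
    (fun k _ => Complex.normSq_nonneg (c t k - t' t * φ k))).mp h2 k (Finset.mem_univ k)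
  have h4 : c t k - t' t * φ k = 0 := Complex.normSq_eq_zero.mp h3
  exact sub_eq_zero.mp h4

end Stmt14X

namespace Stmt14Y

lemma rank_fact {m n : Type*} [Fintype m] [Fintype n] [DecidableEq m] [DecidableEq n]
    (M : Matrix m n ℂ) :
    ∃ (r : ℕ) (M₁ : Matrix m (Fin r) ℂ) (M₂ : Matrix (Fin r) n ℂ)
      (Lf : Matrix (Fin r) m ℂ) (Rf : Matrix n (Fin r) ℂ),
      M = M₁ * M₂ ∧ Lf * M₁ = 1 ∧ M₂ * Rf = 1 := by
  classical
  set f : (n → ℂ) →ₗ[ℂ] (m → ℂ) := Matrix.toLin' M with hf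
  set V := LinearMap.range f with hV
  let b : Module.Basis (Fin (Module.finrank ℂ V)) ℂ V := Module.finBasis ℂ V
  let bm := Pi.basisFun ℂ m
  let bn := Pi.basisFun ℂ n
  let ι : V →ₗ[ℂ] (m → ℂ) := V.subtype
  let π : (n → ℂ) →ₗ[ℂ] V := f.rangeRestrict
  obtain ⟨l, hl⟩ := ι.exists_leftInverse_of_injective (Submodule.ker_subtype V)
  obtain ⟨rinv, hr⟩ := π.exists_rightInverse_of_surjective
      (LinearMap.range_eq_top.2 (LinearMap.surjective_rangeRestrict f))
  refine ⟨Module.finrank ℂ V, LinearMap.toMatrix b bm ι, LinearMap.toMatrix bn b π,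
      LinearMap.toMatrix bm b l, LinearMap.toMatrix b bn rinv, ?_, ?_, ?_⟩
  · have h1 : M = LinearMap.toMatrix bn bm f := by
      rw [hf]
      show M = LinearMap.toMatrix' (Matrix.toLin' M)
      rw [LinearMap.toMatrix'_toLin']
    have h2 : f = ι.comp π := by
      rw [LinearMap.subtype_comp_codRestrict]
    rw [h1, h2, LinearMap.toMatrix_comp bn b bm ι π]
  · rw [← LinearMap.toMatrix_comp b bm b l ι, hl, LinearMap.toMatrix_id]
  · rw [← LinearMap.toMatrix_comp b bn b π rinv, hr, LinearMap.toMatrix_id]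

lemma core {a b eA eB : Type*} [Fintype a] [Fintype b] [Fintype eA] [Fintype eB]
    [DecidableEq a] [DecidableEq b] [DecidableEq eA] [DecidableEq eB]
    (A : Matrix a a ℂ) (B : Matrix b b ℂ) (Ψ : Matrix a b ℂ) (G GA GB : Matrix eA eB ℂ)
    (X : Matrix (a × eA) (a × eA) ℂ) (Y : Matrix (b × eB) (b × eB) ℂ)
    (hI : X * (Ψ ⊗ₖ G) = (A * Ψ) ⊗ₖ GA) (hII : (Ψ ⊗ₖ G) * Y = (Ψ * B) ⊗ₖ GB) :
    ∃ G₄ : Matrix eA eB ℂ, X * (Ψ ⊗ₖ G) * Y = (A * Ψ * B) ⊗ₖ G₄ := by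
  obtain ⟨r, P₁, P₂, Lp, Rp, hP, hLp, hRp⟩ := rank_fact Ψ
  obtain ⟨s, G₁, G₂, Lg, Rg, hG, hLg, hRg⟩ := rank_fact G
  have hsplit : (Ψ ⊗ₖ G) = (P₁ ⊗ₖ G₁) * (P₂ ⊗ₖ G₂) := by
    rw [← Matrix.mul_kronecker_mul, ← hP, ← hG]
  have hrinv : (P₂ ⊗ₖ G₂) * (Rp ⊗ₖ Rg) = 1 := by
    rw [← Matrix.mul_kronecker_mul, hRp, hRg, Matrix.one_kronecker_one]
  have hlinv : (Lp ⊗ₖ Lg) * (P₁ ⊗ₖ G₁) = 1 := by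
    rw [← Matrix.mul_kronecker_mul, hLp, hLg, Matrix.one_kronecker_one]
  have hstep1 : X * (P₁ ⊗ₖ G₁) = (A * P₁) ⊗ₖ (GA * Rg) := by
    calc X * (P₁ ⊗ₖ G₁) = X * (P₁ ⊗ₖ G₁) * ((P₂ ⊗ₖ G₂) * (Rp ⊗ₖ Rg)) := by
          rw [hrinv, Matrix.mul_one]
      _ = (X * (Ψ ⊗ₖ G)) * (Rp ⊗ₖ Rg) := by
          simp only [hsplit, Matrix.mul_assoc]
      _ = ((A * Ψ) ⊗ₖ GA) * (Rp ⊗ₖ Rg) := by rw [hI]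
      _ = ((A * Ψ) * Rp) ⊗ₖ (GA * Rg) := by rw [← Matrix.mul_kronecker_mul]
      _ = (A * P₁) ⊗ₖ (GA * Rg) := by
          congr 1
          rw [hP, Matrix.mul_assoc, Matrix.mul_assoc, hRp, Matrix.mul_one]
  have hstep2 : (P₂ ⊗ₖ G₂) * Y = (P₂ * B) ⊗ₖ (Lg * GB) := by
    calc (P₂ ⊗ₖ G₂) * Y = ((Lp ⊗ₖ Lg) * (P₁ ⊗ₖ G₁)) * ((P₂ ⊗ₖ G₂) * Y) := by
          rw [hlinv, Matrix.one_mul]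
      _ = (Lp ⊗ₖ Lg) * (((Ψ ⊗ₖ G) * Y)) := by
          simp only [hsplit, Matrix.mul_assoc]
      _ = (Lp ⊗ₖ Lg) * ((Ψ * B) ⊗ₖ GB) := by rw [hII]
      _ = (Lp * (Ψ * B)) ⊗ₖ (Lg * GB) := by rw [← Matrix.mul_kronecker_mul]
      _ = (P₂ * B) ⊗ₖ (Lg * GB) := by
          congr 1
          rw [hP, ← Matrix.mul_assoc, ← Matrix.mul_assoc, hLp, Matrix.one_mul]
  refine ⟨(GA * Rg) * (Lg * GB), ?_⟩
  calc X * (Ψ ⊗ₖ G) * Y = (X * (P₁ ⊗ₖ G₁)) * ((P₂ ⊗ₖ G₂) * Y) := by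
        simp only [hsplit, Matrix.mul_assoc]
    _ = ((A * P₁) ⊗ₖ (GA * Rg)) * ((P₂ * B) ⊗ₖ (Lg * GB)) := by rw [hstep1, hstep2]
    _ = ((A * P₁) * (P₂ * B)) ⊗ₖ ((GA * Rg) * (Lg * GB)) := by
        rw [← Matrix.mul_kronecker_mul]
    _ = (A * Ψ * B) ⊗ₖ ((GA * Rg) * (Lg * GB)) := by
        congr 1
        simp only [hP, Matrix.mul_assoc]

end Stmt14Y

namespace Stmt14Z
variable {dA dB p q NK NL : ℕ}

noncomputable def NM (S : Matrix (Fin p × Fin q) (Fin p × Fin q) ℂ) (v : Fin dA × Fin dB → ℂ) :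
    Matrix ((Fin dA × Fin p) × (Fin dB × Fin q)) (Fin p × Fin q) ℂ :=
  Matrix.of fun rc e => v (rc.1.1, rc.2.1) * S (rc.1.2, rc.2.2) e

noncomputable def OM (K : Fin NK → Matrix (Fin dA) (Fin dA × Fin p) ℂ)
    (L : Fin NL → Matrix (Fin dB) (Fin dB × Fin q) ℂ)
    (S : Matrix (Fin p × Fin q) (Fin p × Fin q) ℂ) (v : Fin dA × Fin dB → ℂ) :
    Matrix (Fin dA × (Fin NK × Fin p)) (Fin dB × (Fin NL × Fin q)) ℂ :=
  Matrix.of fun aI bJ =>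
    ((K aI.2.1 ⊗ₖ L bJ.2.1) * NM S v) (aI.1, bJ.1) (aI.2.2, bJ.2.2)

variable {K : Fin NK → Matrix (Fin dA) (Fin dA × Fin p) ℂ}
  {L : Fin NL → Matrix (Fin dB) (Fin dB × Fin q) ℂ}
  {S σ : Matrix (Fin p × Fin q) (Fin p × Fin q) ℂ}


lemma NM_smul (c : ℂ) (v : Fin dA × Fin dB → ℂ) : NM S (c • v) = c • NM S v := by
  ext rc e
  simp only [NM, Matrix.of_apply, Pi.smul_apply, Matrix.smul_apply, smul_eq_mul]
  ring

lemma OM_smul (c : ℂ) (v : Fin dA × Fin dB → ℂ) :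
    OM K L S (c • v) = c • OM K L S v := by
  ext aI bJ
  simp only [OM, Matrix.of_apply, NM_smul, Matrix.mul_smul, Matrix.smul_apply]

lemma NM_B (B : Matrix (Fin dB) (Fin dB) ℂ) (v : Fin dA × Fin dB → ℂ) :
    ((1 : Matrix (Fin dA × Fin p) (Fin dA × Fin p) ℂ) ⊗ₖ
        (B ⊗ₖ (1 : Matrix (Fin q) (Fin q) ℂ))) * NM S v =
      NM S (((1 : Matrix (Fin dA) (Fin dA) ℂ) ⊗ₖ B) *ᵥ v) := by
  ext ⟨⟨α, ξ⟩, ⟨β, ζ⟩⟩ e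
  simp only [NM, Matrix.mul_apply, Matrix.of_apply, Matrix.kroneckerMap_apply,
    Matrix.one_apply, Matrix.mulVec, dotProduct]
  rw [Fintype.sum_prod_type]
  simp only [Prod.mk.injEq, ite_and, mul_ite, ite_mul, one_mul, zero_mul, mul_zero, mul_one]
  simp [Fintype.sum_prod_type, Finset.sum_ite_eq, Finset.sum_ite_eq', Finset.mul_sum,
    Finset.sum_mul, mul_assoc]

lemma kron_one_mul_apply {C : Type*} [Fintype C] (Q : Matrix (Fin dA) (Fin dA) ℂ)
    (T : Matrix (Fin dA × Fin dB) C ℂ) (a : Fin dA) (b : Fin dB) (c : C) :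
    ((Q ⊗ₖ (1 : Matrix (Fin dB) (Fin dB) ℂ)) * T) (a, b) c = ∑ a', Q a a' * T (a', b) c := by
  rw [Matrix.mul_apply, Fintype.sum_prod_type]
  simp [Matrix.kroneckerMap_apply, Matrix.one_apply, ite_mul, mul_ite,
    Finset.sum_ite_eq, Finset.sum_ite_eq', mul_assoc]

lemma one_kron_mul_apply {C : Type*} [Fintype C] (R : Matrix (Fin dB) (Fin dB) ℂ)
    (T : Matrix (Fin dA × Fin dB) C ℂ) (a : Fin dA) (b : Fin dB) (c : C) :
    (((1 : Matrix (Fin dA) (Fin dA) ℂ) ⊗ₖ R) * T) (a, b) c = ∑ b', R b b' * T (a, b') c := by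
  rw [Matrix.mul_apply, Fintype.sum_prod_type]
  simp [Matrix.kroneckerMap_apply, Matrix.one_apply, ite_mul, mul_ite,
    Finset.sum_ite_eq, Finset.sum_ite_eq', mul_assoc]

lemma sum_kron_left {ι m n m' n' : Type*} (s : Finset ι)
    (f : ι → Matrix m n ℂ) (B : Matrix m' n' ℂ) :
    (∑ i ∈ s, f i) ⊗ₖ B = ∑ i ∈ s, (f i ⊗ₖ B) := by
  ext ⟨i1, i2⟩ ⟨j1, j2⟩
  simp [Matrix.sum_apply, Finset.sum_mul]

lemma sum_kron_right {ι m n m' n' : Type*} (s : Finset ι)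
    (A : Matrix m n ℂ) (f : ι → Matrix m' n' ℂ) :
    A ⊗ₖ (∑ i ∈ s, f i) = ∑ i ∈ s, (A ⊗ₖ f i) := by
  ext ⟨i1, i2⟩ ⟨j1, j2⟩
  simp [Matrix.sum_apply, Finset.mul_sum]


lemma NM_A' (A : Matrix (Fin dA) (Fin dA) ℂ) (v : Fin dA × Fin dB → ℂ) :
    ((A ⊗ₖ (1 : Matrix (Fin p) (Fin p) ℂ)) ⊗ₖ
        (1 : Matrix (Fin dB × Fin q) (Fin dB × Fin q) ℂ)) * NM S v =
      NM S ((A ⊗ₖ (1 : Matrix (Fin dB) (Fin dB) ℂ)) *ᵥ v) := by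
  ext ⟨⟨α, ξ⟩, ⟨β, ζ⟩⟩ e
  simp only [NM, Matrix.mul_apply, Matrix.of_apply, Matrix.kroneckerMap_apply,
    Matrix.one_apply, Matrix.mulVec, dotProduct]
  rw [Fintype.sum_prod_type]
  simp only [Prod.mk.injEq, ite_and, mul_ite, ite_mul, one_mul, zero_mul, mul_zero, mul_one]
  rw [Finset.sum_comm]
  simp [Fintype.sum_prod_type, Finset.sum_ite_eq, Finset.sum_ite_eq', Finset.mul_sum,
    Finset.sum_mul, mul_assoc]

lemma M1 (hK : ∑ i, (K i)ᴴ * K i = 1) (A : Matrix (Fin dA) (Fin dA) ℂ)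
    (v : Fin dA × Fin dB → ℂ) (i : Fin NK) (j : Fin NL) :
    ∑ i', ((K i * (A ⊗ₖ (1 : Matrix (Fin p) (Fin p) ℂ)) * (K i')ᴴ) ⊗ₖ
        (1 : Matrix (Fin dB) (Fin dB) ℂ)) * ((K i' ⊗ₖ L j) * NM S v)
      = (K i ⊗ₖ L j) * NM S ((A ⊗ₖ (1 : Matrix (Fin dB) (Fin dB) ℂ)) *ᵥ v) := by
  have step1 : ∀ i' : Fin NK,
      ((K i * (A ⊗ₖ (1 : Matrix (Fin p) (Fin p) ℂ)) * (K i')ᴴ) ⊗ₖ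
        (1 : Matrix (Fin dB) (Fin dB) ℂ)) * ((K i' ⊗ₖ L j) * NM S v)
      = ((K i * (A ⊗ₖ (1 : Matrix (Fin p) (Fin p) ℂ)) * ((K i')ᴴ * K i')) ⊗ₖ L j) * NM S v := by
    intro i'
    rw [← Matrix.mul_assoc, ← Matrix.mul_kronecker_mul, Matrix.one_mul, Matrix.mul_assoc]
  calc ∑ i', ((K i * (A ⊗ₖ (1 : Matrix (Fin p) (Fin p) ℂ)) * (K i')ᴴ) ⊗ₖ
        (1 : Matrix (Fin dB) (Fin dB) ℂ)) * ((K i' ⊗ₖ L j) * NM S v)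
      = ∑ i', ((K i * (A ⊗ₖ (1 : Matrix (Fin p) (Fin p) ℂ)) * ((K i')ᴴ * K i')) ⊗ₖ L j) * NM S v :=
        Finset.sum_congr rfl fun i' _ => step1 i'
    _ = ((∑ i', K i * (A ⊗ₖ (1 : Matrix (Fin p) (Fin p) ℂ)) * ((K i')ᴴ * K i')) ⊗ₖ L j) * NM S v := by
        rw [sum_kron_left, Matrix.sum_mul]
    _ = ((K i * (A ⊗ₖ (1 : Matrix (Fin p) (Fin p) ℂ))) ⊗ₖ L j) * NM S v := by
        congr 2
        rw [← Matrix.mul_sum, hK, Matrix.mul_one]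
    _ = ((K i ⊗ₖ L j) * ((A ⊗ₖ (1 : Matrix (Fin p) (Fin p) ℂ)) ⊗ₖ
          (1 : Matrix (Fin dB × Fin q) (Fin dB × Fin q) ℂ))) * NM S v := by
        rw [← Matrix.mul_kronecker_mul, Matrix.mul_one]
    _ = (K i ⊗ₖ L j) * NM S ((A ⊗ₖ (1 : Matrix (Fin dB) (Fin dB) ℂ)) *ᵥ v) := by
        rw [Matrix.mul_assoc, NM_A']

lemma M2 (hL : ∑ j, (L j)ᴴ * L j = 1) (B : Matrix (Fin dB) (Fin dB) ℂ)
    (v : Fin dA × Fin dB → ℂ) (i : Fin NK) (j : Fin NL) :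
    ∑ j', ((1 : Matrix (Fin dA) (Fin dA) ℂ) ⊗ₖ
        (L j * (B ⊗ₖ (1 : Matrix (Fin q) (Fin q) ℂ)) * (L j')ᴴ)) * ((K i ⊗ₖ L j') * NM S v)
      = (K i ⊗ₖ L j) * NM S (((1 : Matrix (Fin dA) (Fin dA) ℂ) ⊗ₖ B) *ᵥ v) := by
  have step1 : ∀ j' : Fin NL,
      ((1 : Matrix (Fin dA) (Fin dA) ℂ) ⊗ₖ
        (L j * (B ⊗ₖ (1 : Matrix (Fin q) (Fin q) ℂ)) * (L j')ᴴ)) * ((K i ⊗ₖ L j') * NM S v)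
      = (K i ⊗ₖ (L j * (B ⊗ₖ (1 : Matrix (Fin q) (Fin q) ℂ)) * ((L j')ᴴ * L j'))) * NM S v := by
    intro j'
    rw [← Matrix.mul_assoc, ← Matrix.mul_kronecker_mul, Matrix.one_mul, Matrix.mul_assoc]
  calc ∑ j', ((1 : Matrix (Fin dA) (Fin dA) ℂ) ⊗ₖ
        (L j * (B ⊗ₖ (1 : Matrix (Fin q) (Fin q) ℂ)) * (L j')ᴴ)) * ((K i ⊗ₖ L j') * NM S v)
      = ∑ j', (K i ⊗ₖ (L j * (B ⊗ₖ (1 : Matrix (Fin q) (Fin q) ℂ)) * ((L j')ᴴ * L j'))) * NM S v :=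
        Finset.sum_congr rfl fun j' _ => step1 j'
    _ = ((K i) ⊗ₖ (∑ j', L j * (B ⊗ₖ (1 : Matrix (Fin q) (Fin q) ℂ)) * ((L j')ᴴ * L j'))) * NM S v := by
        rw [sum_kron_right, Matrix.sum_mul]
    _ = ((K i) ⊗ₖ (L j * (B ⊗ₖ (1 : Matrix (Fin q) (Fin q) ℂ)))) * NM S v := by
        congr 2
        rw [← Matrix.mul_sum, hL, Matrix.mul_one]
    _ = ((K i ⊗ₖ L j) * ((1 : Matrix (Fin dA × Fin p) (Fin dA × Fin p) ℂ) ⊗ₖ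
          (B ⊗ₖ (1 : Matrix (Fin q) (Fin q) ℂ)))) * NM S v := by
        rw [← Matrix.mul_kronecker_mul, Matrix.mul_one]
    _ = (K i ⊗ₖ L j) * NM S (((1 : Matrix (Fin dA) (Fin dA) ℂ) ⊗ₖ B) *ᵥ v) := by
        rw [Matrix.mul_assoc, NM_B]


lemma exists_X (hK : ∑ i, (K i)ᴴ * K i = 1) (A : Matrix (Fin dA) (Fin dA) ℂ) :
    ∃ X : Matrix (Fin dA × (Fin NK × Fin p)) (Fin dA × (Fin NK × Fin p)) ℂ,
      ∀ v, X * OM K L S v = OM K L S ((A ⊗ₖ (1 : Matrix (Fin dB) (Fin dB) ℂ)) *ᵥ v) := by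
  refine ⟨Matrix.of fun aI a'I' =>
      if aI.2.2 = a'I'.2.2
      then (K aI.2.1 * (A ⊗ₖ (1 : Matrix (Fin p) (Fin p) ℂ)) * (K a'I'.2.1)ᴴ) aI.1 a'I'.1
      else 0, fun v => ?_⟩
  ext ⟨a, i, x⟩ ⟨b, j, y⟩
  rw [Matrix.mul_apply]
  have h1 : ∀ a'I' : Fin dA × (Fin NK × Fin p),
      (Matrix.of fun aI a'I' : Fin dA × (Fin NK × Fin p) =>
        if aI.2.2 = a'I'.2.2
        then (K aI.2.1 * (A ⊗ₖ (1 : Matrix (Fin p) (Fin p) ℂ)) * (K a'I'.2.1)ᴴ) aI.1 a'I'.1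
        else 0) (a, (i, x)) a'I' * OM K L S v a'I' (b, (j, y))
      = (if x = a'I'.2.2 then
          ((K i * (A ⊗ₖ (1 : Matrix (Fin p) (Fin p) ℂ)) * (K a'I'.2.1)ᴴ) a a'I'.1
            * ((K a'I'.2.1 ⊗ₖ L j) * NM S v) (a'I'.1, b) (a'I'.2.2, y)) else 0) := by
    intro a'I'
    by_cases h : x = a'I'.2.2 <;> simp [OM, h]
  rw [Finset.sum_congr rfl fun a'I' _ => h1 a'I']
  rw [Fintype.sum_prod_type]
  have h2 : ∀ a' : Fin dA, (∑ I' : Fin NK × Fin p,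
      if x = I'.2 then
        ((K i * (A ⊗ₖ (1 : Matrix (Fin p) (Fin p) ℂ)) * (K I'.1)ᴴ) a a'
          * ((K I'.1 ⊗ₖ L j) * NM S v) (a', b) (I'.2, y)) else 0)
      = ∑ i' : Fin NK, (K i * (A ⊗ₖ (1 : Matrix (Fin p) (Fin p) ℂ)) * (K i')ᴴ) a a'
          * ((K i' ⊗ₖ L j) * NM S v) (a', b) (x, y) := by
    intro a'
    rw [Fintype.sum_prod_type]
    refine Finset.sum_congr rfl fun i' _ => ?_
    simp [Finset.sum_ite_eq]
  rw [Finset.sum_congr rfl fun a' _ => h2 a', Finset.sum_comm]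
  have h3 : ∀ i' : Fin NK, (∑ a' : Fin dA,
      (K i * (A ⊗ₖ (1 : Matrix (Fin p) (Fin p) ℂ)) * (K i')ᴴ) a a'
        * ((K i' ⊗ₖ L j) * NM S v) (a', b) (x, y))
      = (((K i * (A ⊗ₖ (1 : Matrix (Fin p) (Fin p) ℂ)) * (K i')ᴴ) ⊗ₖ
          (1 : Matrix (Fin dB) (Fin dB) ℂ)) * ((K i' ⊗ₖ L j) * NM S v)) (a, b) (x, y) :=
    fun i' => (kron_one_mul_apply _ _ a b (x, y)).symm
  rw [Finset.sum_congr rfl fun i' _ => h3 i']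
  have h4 : (∑ i' : Fin NK,
      (((K i * (A ⊗ₖ (1 : Matrix (Fin p) (Fin p) ℂ)) * (K i')ᴴ) ⊗ₖ
          (1 : Matrix (Fin dB) (Fin dB) ℂ)) * ((K i' ⊗ₖ L j) * NM S v)) (a, b) (x, y))
      = (∑ i' : Fin NK,
        (((K i * (A ⊗ₖ (1 : Matrix (Fin p) (Fin p) ℂ)) * (K i')ᴴ) ⊗ₖ
          (1 : Matrix (Fin dB) (Fin dB) ℂ)) * ((K i' ⊗ₖ L j) * NM S v))) (a, b) (x, y) := by
    rw [Matrix.sum_apply]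
  rw [h4, M1 hK A v i j]
  rfl

lemma exists_Y (hL : ∑ j, (L j)ᴴ * L j = 1) (B : Matrix (Fin dB) (Fin dB) ℂ) :
    ∃ Y : Matrix (Fin dB × (Fin NL × Fin q)) (Fin dB × (Fin NL × Fin q)) ℂ,
      ∀ v, OM K L S v * Y = OM K L S (((1 : Matrix (Fin dA) (Fin dA) ℂ) ⊗ₖ B) *ᵥ v) := by
  refine ⟨Matrix.of fun b'J' bJ =>
      if b'J'.2.2 = bJ.2.2
      then (L bJ.2.1 * (B ⊗ₖ (1 : Matrix (Fin q) (Fin q) ℂ)) * (L b'J'.2.1)ᴴ) bJ.1 b'J'.1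
      else 0, fun v => ?_⟩
  ext ⟨a, i, x⟩ ⟨b, j, y⟩
  rw [Matrix.mul_apply]
  have h1 : ∀ b'J' : Fin dB × (Fin NL × Fin q),
      OM K L S v (a, (i, x)) b'J' *
      (Matrix.of fun b'J' bJ : Fin dB × (Fin NL × Fin q) =>
        if b'J'.2.2 = bJ.2.2
        then (L bJ.2.1 * (B ⊗ₖ (1 : Matrix (Fin q) (Fin q) ℂ)) * (L b'J'.2.1)ᴴ) bJ.1 b'J'.1
        else 0) b'J' (b, (j, y))
      = (if b'J'.2.2 = y then
          ((L j * (B ⊗ₖ (1 : Matrix (Fin q) (Fin q) ℂ)) * (L b'J'.2.1)ᴴ) b b'J'.1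
            * ((K i ⊗ₖ L b'J'.2.1) * NM S v) (a, b'J'.1) (x, b'J'.2.2)) else 0) := by
    intro b'J'
    by_cases h : b'J'.2.2 = y <;> simp [OM, h, mul_comm]
  rw [Finset.sum_congr rfl fun b'J' _ => h1 b'J']
  rw [Fintype.sum_prod_type]
  have h2 : ∀ b' : Fin dB, (∑ J' : Fin NL × Fin q,
      if J'.2 = y then
        ((L j * (B ⊗ₖ (1 : Matrix (Fin q) (Fin q) ℂ)) * (L J'.1)ᴴ) b b'
          * ((K i ⊗ₖ L J'.1) * NM S v) (a, b') (x, J'.2)) else 0)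
      = ∑ j' : Fin NL, (L j * (B ⊗ₖ (1 : Matrix (Fin q) (Fin q) ℂ)) * (L j')ᴴ) b b'
          * ((K i ⊗ₖ L j') * NM S v) (a, b') (x, y) := by
    intro b'
    rw [Fintype.sum_prod_type]
    refine Finset.sum_congr rfl fun j' _ => ?_
    simp [Finset.sum_ite_eq']
  rw [Finset.sum_congr rfl fun b' _ => h2 b', Finset.sum_comm]
  have h3 : ∀ j' : Fin NL, (∑ b' : Fin dB,
      (L j * (B ⊗ₖ (1 : Matrix (Fin q) (Fin q) ℂ)) * (L j')ᴴ) b b'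
        * ((K i ⊗ₖ L j') * NM S v) (a, b') (x, y))
      = (((1 : Matrix (Fin dA) (Fin dA) ℂ) ⊗ₖ
          (L j * (B ⊗ₖ (1 : Matrix (Fin q) (Fin q) ℂ)) * (L j')ᴴ)) *
            ((K i ⊗ₖ L j') * NM S v)) (a, b) (x, y) :=
    fun j' => (one_kron_mul_apply _ _ a b (x, y)).symm
  rw [Finset.sum_congr rfl fun j' _ => h3 j']
  have h4 : (∑ j' : Fin NL,
      (((1 : Matrix (Fin dA) (Fin dA) ℂ) ⊗ₖ
          (L j * (B ⊗ₖ (1 : Matrix (Fin q) (Fin q) ℂ)) * (L j')ᴴ)) *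
            ((K i ⊗ₖ L j') * NM S v)) (a, b) (x, y))
      = (∑ j' : Fin NL,
        (((1 : Matrix (Fin dA) (Fin dA) ℂ) ⊗ₖ
          (L j * (B ⊗ₖ (1 : Matrix (Fin q) (Fin q) ℂ)) * (L j')ᴴ)) *
            ((K i ⊗ₖ L j') * NM S v))) (a, b) (x, y) := by
    rw [Matrix.sum_apply]
  rw [h4, M2 hL B v i j]
  rfl


lemma kron_conjT {m n m' n' : Type*} [Fintype m] [Fintype n] [Fintype m'] [Fintype n']
    (A : Matrix m n ℂ) (B : Matrix m' n' ℂ) : (A ⊗ₖ B)ᴴ = Aᴴ ⊗ₖ Bᴴ := by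
  ext ⟨i, i'⟩ ⟨j, j'⟩
  simp [Matrix.conjTranspose_apply, Matrix.kroneckerMap_apply, star_mul']

lemma NM_mul_conjT (hS : S * Sᴴ = σ) (v w : Fin dA × Fin dB → ℂ) :
    NM S v * (NM S w)ᴴ =
      (Matrix.reindex (Equiv.prodProdProdComm (Fin dA) (Fin dB) (Fin p) (Fin q))
        (Equiv.prodProdProdComm (Fin dA) (Fin dB) (Fin p) (Fin q))
        ((Matrix.vecMulVec v (star w)) ⊗ₖ σ)) := by
  ext ⟨⟨α, ξ⟩, ⟨β, ζ⟩⟩ ⟨⟨α', ξ'⟩, ⟨β', ζ'⟩⟩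
  have hσe : σ (ξ, ζ) (ξ', ζ') =
      ∑ e : Fin p × Fin q, S (ξ, ζ) e * (starRingEnd ℂ) (S (ξ', ζ') e) := by
    rw [← hS]
    simp [Matrix.mul_apply, Matrix.conjTranspose_apply, RCLike.star_def]
  simp only [NM, Matrix.mul_apply, Matrix.of_apply, Matrix.conjTranspose_apply,
    Matrix.reindex_apply, Matrix.submatrix_apply, Matrix.kroneckerMap_apply,
    Matrix.vecMulVec_apply, Pi.star_apply, Equiv.prodProdProdComm_symm,
    Equiv.prodProdProdComm_apply, RCLike.star_def, _root_.map_mul]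
  rw [hσe, Finset.mul_sum]
  refine Finset.sum_congr rfl fun e _ => ?_
  ring

lemma L1 (hS : S * Sᴴ = σ) (v w : Fin dA × Fin dB → ℂ) (a a' : Fin dA) (b b' : Fin dB) :
    (∑ i, ∑ j, (K i ⊗ₖ L j) *
        (Matrix.reindex (Equiv.prodProdProdComm (Fin dA) (Fin dB) (Fin p) (Fin q))
          (Equiv.prodProdProdComm (Fin dA) (Fin dB) (Fin p) (Fin q))
          ((Matrix.vecMulVec v (star w)) ⊗ₖ σ)) * (K i ⊗ₖ L j)ᴴ) (a, b) (a', b')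
    = ∑ I : Fin NK × Fin p, ∑ J : Fin NL × Fin q,
        OM K L S v (a, I) (b, J) * (starRingEnd ℂ) (OM K L S w (a', I) (b', J)) := by
  have hmat : ∀ (i : Fin NK) (j : Fin NL),
      (K i ⊗ₖ L j) *
        (Matrix.reindex (Equiv.prodProdProdComm (Fin dA) (Fin dB) (Fin p) (Fin q))
          (Equiv.prodProdProdComm (Fin dA) (Fin dB) (Fin p) (Fin q))
          ((Matrix.vecMulVec v (star w)) ⊗ₖ σ)) * (K i ⊗ₖ L j)ᴴ
      = ((K i ⊗ₖ L j) * NM S v) * ((K i ⊗ₖ L j) * NM S w)ᴴ := by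
    intro i j
    rw [← NM_mul_conjT hS v w, Matrix.conjTranspose_mul]
    simp only [Matrix.mul_assoc]
  have lhs_eq : (∑ i, ∑ j, (K i ⊗ₖ L j) *
        (Matrix.reindex (Equiv.prodProdProdComm (Fin dA) (Fin dB) (Fin p) (Fin q))
          (Equiv.prodProdProdComm (Fin dA) (Fin dB) (Fin p) (Fin q))
          ((Matrix.vecMulVec v (star w)) ⊗ₖ σ)) * (K i ⊗ₖ L j)ᴴ) (a, b) (a', b')
      = ∑ i, ∑ j, ∑ x : Fin p, ∑ y : Fin q,
          OM K L S v (a, (i, x)) (b, (j, y)) *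
            (starRingEnd ℂ) (OM K L S w (a', (i, x)) (b', (j, y))) := by
    simp only [Matrix.sum_apply]
    refine Finset.sum_congr rfl fun i _ => Finset.sum_congr rfl fun j _ => ?_
    rw [hmat i j, Matrix.mul_apply, Fintype.sum_prod_type]
    refine Finset.sum_congr rfl fun x _ => Finset.sum_congr rfl fun y _ => ?_
    rw [Matrix.conjTranspose_apply]
    rfl
  rw [lhs_eq, Fintype.sum_prod_type]
  refine Finset.sum_congr rfl fun i _ => ?_
  rw [Finset.sum_comm]
  refine Finset.sum_congr rfl fun x _ => ?_
  rw [Fintype.sum_prod_type]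

lemma trace_reindex_eq {m n : Type*} [Fintype m] [Fintype n] [DecidableEq m] [DecidableEq n]
    (e : m ≃ n) (M : Matrix m m ℂ) :
    Matrix.trace (Matrix.reindex e e M) = Matrix.trace M := by
  simp only [Matrix.trace, Matrix.reindex_apply, Matrix.diag, Matrix.submatrix_apply]
  exact Equiv.sum_comp e.symm (fun j => M j j)

lemma trace_pres (hK : ∑ i, (K i)ᴴ * K i = 1) (hL : ∑ j, (L j)ᴴ * L j = 1)
    (M : Matrix (Fin dA × Fin dB) (Fin dA × Fin dB) ℂ) :
    Matrix.trace (∑ i, ∑ j, (K i ⊗ₖ L j) *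
        (Matrix.reindex (Equiv.prodProdProdComm (Fin dA) (Fin dB) (Fin p) (Fin q))
          (Equiv.prodProdProdComm (Fin dA) (Fin dB) (Fin p) (Fin q))
          (M ⊗ₖ σ)) * (K i ⊗ₖ L j)ᴴ)
      = Matrix.trace M * Matrix.trace σ := by
  set R := Matrix.reindex (Equiv.prodProdProdComm (Fin dA) (Fin dB) (Fin p) (Fin q))
          (Equiv.prodProdProdComm (Fin dA) (Fin dB) (Fin p) (Fin q)) (M ⊗ₖ σ) with hR
  have h1 : ∀ (i : Fin NK) (j : Fin NL),
      Matrix.trace ((K i ⊗ₖ L j) * R * (K i ⊗ₖ L j)ᴴ)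
      = Matrix.trace ((((K i)ᴴ * K i) ⊗ₖ ((L j)ᴴ * L j)) * R) := by
    intro i j
    rw [Matrix.trace_mul_cycle, kron_conjT, ← Matrix.mul_kronecker_mul]
  calc Matrix.trace (∑ i, ∑ j, (K i ⊗ₖ L j) * R * (K i ⊗ₖ L j)ᴴ)
      = ∑ i, ∑ j, Matrix.trace ((((K i)ᴴ * K i) ⊗ₖ ((L j)ᴴ * L j)) * R) := by
        rw [Matrix.trace_sum]
        refine Finset.sum_congr rfl fun i _ => ?_
        rw [Matrix.trace_sum]
        exact Finset.sum_congr rfl fun j _ => h1 i j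
    _ = Matrix.trace ((∑ i, ∑ j, (((K i)ᴴ * K i) ⊗ₖ ((L j)ᴴ * L j))) * R) := by
        rw [Matrix.sum_mul, Matrix.trace_sum]
        refine Finset.sum_congr rfl fun i _ => ?_
        rw [Matrix.sum_mul, Matrix.trace_sum]
    _ = Matrix.trace R := by
        have : (∑ i, ∑ j, (((K i)ᴴ * K i) ⊗ₖ ((L j)ᴴ * L j)))
            = (1 : Matrix ((Fin dA × Fin p) × Fin dB × Fin q) ((Fin dA × Fin p) × Fin dB × Fin q) ℂ) := by
          have e1 : ∀ i : Fin NK, (∑ j, (((K i)ᴴ * K i) ⊗ₖ ((L j)ᴴ * L j)))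
              = ((K i)ᴴ * K i) ⊗ₖ (1 : Matrix (Fin dB × Fin q) (Fin dB × Fin q) ℂ) := by
            intro i
            rw [← sum_kron_right, hL]
          rw [Finset.sum_congr rfl fun i _ => e1 i, ← sum_kron_left, hK,
            Matrix.one_kronecker_one]
        rw [this, Matrix.one_mul]
    _ = Matrix.trace M * Matrix.trace σ := by
        rw [hR, trace_reindex_eq, Matrix.trace_kronecker]

lemma L2 (hK : ∑ i, (K i)ᴴ * K i = 1) (hL : ∑ j, (L j)ᴴ * L j = 1)
    (hS : S * Sᴴ = σ) (hσtr : σ.trace = 1) (v : Fin dA × Fin dB → ℂ) :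
    ∑ aI : Fin dA × (Fin NK × Fin p), ∑ bJ : Fin dB × (Fin NL × Fin q),
      OM K L S v aI bJ * (starRingEnd ℂ) (OM K L S v aI bJ) = star v ⬝ᵥ v := by
  set f : Fin dA × (Fin NK × Fin p) → Fin dB × (Fin NL × Fin q) → ℂ :=
    fun aI bJ => OM K L S v aI bJ * (starRingEnd ℂ) (OM K L S v aI bJ) with hf
  calc ∑ aI, ∑ bJ, f aI bJ
      = ∑ z : (Fin dA × (Fin NK × Fin p)) × (Fin dB × (Fin NL × Fin q)), f z.1 z.2 := by
        rw [← Fintype.sum_prod_type']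
    _ = ∑ u : (Fin dA × Fin dB) × ((Fin NK × Fin p) × (Fin NL × Fin q)),
          f (u.1.1, u.2.1) (u.1.2, u.2.2) :=
        (Fintype.sum_equiv
          (Equiv.prodProdProdComm (Fin dA) (Fin dB) (Fin NK × Fin p) (Fin NL × Fin q))
          (fun u => f (u.1.1, u.2.1) (u.1.2, u.2.2))
          (fun z => f z.1 z.2) (fun u => rfl)).symm
    _ = ∑ ab : Fin dA × Fin dB, ∑ IJ : (Fin NK × Fin p) × (Fin NL × Fin q),
          f (ab.1, IJ.1) (ab.2, IJ.2) := by
        rw [Fintype.sum_prod_type]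
    _ = ∑ ab : Fin dA × Fin dB,
          (∑ i, ∑ j, (K i ⊗ₖ L j) *
            (Matrix.reindex (Equiv.prodProdProdComm (Fin dA) (Fin dB) (Fin p) (Fin q))
              (Equiv.prodProdProdComm (Fin dA) (Fin dB) (Fin p) (Fin q))
              ((Matrix.vecMulVec v (star v)) ⊗ₖ σ)) * (K i ⊗ₖ L j)ᴴ) ab ab := by
        refine Finset.sum_congr rfl fun ab _ => ?_
        rw [show ab = (ab.1, ab.2) from rfl, L1 hS v v ab.1 ab.1 ab.2 ab.2,
          Fintype.sum_prod_type]
    _ = Matrix.trace (∑ i, ∑ j, (K i ⊗ₖ L j) *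
            (Matrix.reindex (Equiv.prodProdProdComm (Fin dA) (Fin dB) (Fin p) (Fin q))
              (Equiv.prodProdProdComm (Fin dA) (Fin dB) (Fin p) (Fin q))
              ((Matrix.vecMulVec v (star v)) ⊗ₖ σ)) * (K i ⊗ₖ L j)ᴴ) := by
        simp [Matrix.trace, Matrix.diag]
    _ = Matrix.trace (Matrix.vecMulVec v (star v)) * Matrix.trace σ := trace_pres hK hL _
    _ = star v ⬝ᵥ v := by
        rw [hσtr, mul_one]
        simp only [Matrix.trace, Matrix.diag, Matrix.vecMulVec_apply, dotProduct,
          Pi.star_apply]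
        exact Finset.sum_congr rfl fun k _ => mul_comm _ _


noncomputable def matOf (v : Fin dA × Fin dB → ℂ) : Matrix (Fin dA) (Fin dB) ℂ :=
  Matrix.of fun a b => v (a, b)

lemma matOf_smul (c : ℂ) (v : Fin dA × Fin dB → ℂ) : matOf (c • v) = c • matOf v := by
  ext a b
  simp [matOf]

lemma matOf_A (A : Matrix (Fin dA) (Fin dA) ℂ) (v : Fin dA × Fin dB → ℂ) :
    matOf ((A ⊗ₖ (1 : Matrix (Fin dB) (Fin dB) ℂ)) *ᵥ v) = A * matOf v := by
  ext a b
  simp only [matOf, Matrix.of_apply, Matrix.mulVec, dotProduct, Matrix.mul_apply,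
    Matrix.kroneckerMap_apply, Matrix.one_apply, Fintype.sum_prod_type]
  simp [mul_ite, ite_mul, Finset.sum_ite_eq, Finset.sum_ite_eq']

lemma matOf_B (B : Matrix (Fin dB) (Fin dB) ℂ) (v : Fin dA × Fin dB → ℂ) :
    matOf (((1 : Matrix (Fin dA) (Fin dA) ℂ) ⊗ₖ B) *ᵥ v) = matOf v * Bᵀ := by
  ext a b
  simp only [matOf, Matrix.of_apply, Matrix.mulVec, dotProduct, Matrix.mul_apply,
    Matrix.kroneckerMap_apply, Matrix.one_apply, Matrix.transpose_apply, Fintype.sum_prod_type]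
  simp [mul_ite, ite_mul, Finset.sum_ite_eq, Finset.sum_ite_eq', mul_comm]

lemma kron_decomp (A : Matrix (Fin dA) (Fin dA) ℂ) (B : Matrix (Fin dB) (Fin dB) ℂ) :
    A ⊗ₖ B = (A ⊗ₖ (1 : Matrix (Fin dB) (Fin dB) ℂ)) *
      ((1 : Matrix (Fin dA) (Fin dA) ℂ) ⊗ₖ B) := by
  rw [← Matrix.mul_kronecker_mul, Matrix.mul_one, Matrix.one_mul]

lemma kron_mulVec_ne_zero {A : Matrix (Fin dA) (Fin dA) ℂ} {B : Matrix (Fin dB) (Fin dB) ℂ}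
    (hA : IsUnit A) (hB : IsUnit B) {v : Fin dA × Fin dB → ℂ} (hv : v ≠ 0) :
    (A ⊗ₖ B) *ᵥ v ≠ 0 := by
  intro h
  apply hv
  obtain ⟨uA, huA⟩ := hA
  obtain ⟨uB, huB⟩ := hB
  have h1 : ((↑uA⁻¹ : Matrix (Fin dA) (Fin dA) ℂ) ⊗ₖ (↑uB⁻¹ : Matrix (Fin dB) (Fin dB) ℂ)) *
      (A ⊗ₖ B) = 1 := by
    rw [← Matrix.mul_kronecker_mul, ← huA, ← huB]
    rw [show (↑uA⁻¹ : Matrix (Fin dA) (Fin dA) ℂ) * ↑uA = 1 from uA.inv_mul,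
      show (↑uB⁻¹ : Matrix (Fin dB) (Fin dB) ℂ) * ↑uB = 1 from uB.inv_mul,
      Matrix.one_kronecker_one]
  calc v = (1 : Matrix (Fin dA × Fin dB) (Fin dA × Fin dB) ℂ) *ᵥ v := by rw [Matrix.one_mulVec]
    _ = ((↑uA⁻¹ : Matrix (Fin dA) (Fin dA) ℂ) ⊗ₖ (↑uB⁻¹ : Matrix (Fin dB) (Fin dB) ℂ)) *ᵥ
          ((A ⊗ₖ B) *ᵥ v) := by rw [Matrix.mulVec_mulVec, h1]
    _ = 0 := by rw [h, Matrix.mulVec_zero]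

lemma prodext (hS : S * Sᴴ = σ) (φ : Fin dA × Fin dB → ℂ) (hφ : star φ ⬝ᵥ φ = 1)
    (hfix : (∑ i, ∑ j, (K i ⊗ₖ L j) *
        (Matrix.reindex (Equiv.prodProdProdComm (Fin dA) (Fin dB) (Fin p) (Fin q))
          (Equiv.prodProdProdComm (Fin dA) (Fin dB) (Fin p) (Fin q))
          ((Matrix.vecMulVec φ (star φ)) ⊗ₖ σ)) * (K i ⊗ₖ L j)ᴴ)
      = Matrix.vecMulVec φ (star φ)) :
    ∃ G : Matrix (Fin NK × Fin p) (Fin NL × Fin q) ℂ,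
      OM K L S φ = (matOf φ) ⊗ₖ G := by
  set c : (Fin NK × Fin p) × (Fin NL × Fin q) → Fin dA × Fin dB → ℂ :=
    fun t k => OM K L S φ (k.1, t.1) (k.2, t.2) with hc
  have h : ∀ k k', (∑ t, c t k * (starRingEnd ℂ) (c t k')) = φ k * (starRingEnd ℂ) (φ k') := by
    intro k k'
    have h1 : (∑ t, c t k * (starRingEnd ℂ) (c t k'))
        = ∑ I : Fin NK × Fin p, ∑ J : Fin NL × Fin q,
            OM K L S φ (k.1, I) (k.2, J) * (starRingEnd ℂ) (OM K L S φ (k'.1, I) (k'.2, J)) := by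
      rw [Fintype.sum_prod_type]
    rw [h1, ← L1 hS φ φ k.1 k'.1 k.2 k'.2, hfix]
    simp [Matrix.vecMulVec_apply, RCLike.star_def]
  have hcol := Stmt14X.colmult φ hφ c h
  refine ⟨Matrix.of fun I J => ∑ k', (starRingEnd ℂ) (φ k') * c (I, J) k', ?_⟩
  ext ⟨a, I⟩ ⟨b, J⟩
  have h2 := hcol (I, J) (a, b)
  simp only [hc] at h2
  calc OM K L S φ (a, I) (b, J) = c (I, J) (a, b) := rfl
    _ = (∑ k', (starRingEnd ℂ) (φ k') * c (I, J) k') * φ (a, b) := h2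
    _ = (matOf φ ⊗ₖ (Matrix.of fun I J => ∑ k', (starRingEnd ℂ) (φ k') * c (I, J) k'))
          ((a, I)) ((b, J)) := by
        simp only [Matrix.kroneckerMap_apply, Matrix.of_apply, matOf]
        ring

end Stmt14Z


open Stmt14 Stmt14X Stmt14Y Stmt14Z

/-- eigenstate criterion for LOSE-free channels: let `E` be a localizable
channel on `M_{dA·dB}(ℂ)`, i.e. `E(ρ) = Σ_{i,j} (K_i ⊗ L_j) P (ρ ⊗ σ) P† (K_i ⊗ L_j)†`
for a shared density matrix `σ` on `ℂᵖ ⊗ ℂ^q`, local Kraus families `K_i` (size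
`dA × dA·p`, `Σ K_i†K_i = 1`) and `L_j` (size `dB × dB·q`, `Σ L_j†L_j = 1`), and `P` the
permutation reordering `(ℂ^{dA} ⊗ ℂ^{dB}) ⊗ (ℂᵖ ⊗ ℂ^q)` into
`(ℂ^{dA} ⊗ ℂᵖ) ⊗ (ℂ^{dB} ⊗ ℂ^q)`. If a unit vector `ψ` and its normalized images under
`A ⊗ I` and `I ⊗ B` (with `A`, `B` invertible) are all eigenstates of `E` (fixed pure
states), then so is the normalized image of `ψ` under `A ⊗ B`. -/
theorem stmt_14 (dA dB : ℕ)
    (E : Matrix (Fin dA × Fin dB) (Fin dA × Fin dB) ℂ →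
         Matrix (Fin dA × Fin dB) (Fin dA × Fin dB) ℂ)
    (hloc : ∃ (p q : ℕ), 1 ≤ p ∧ 1 ≤ q ∧
      ∃ σ : Matrix (Fin p × Fin q) (Fin p × Fin q) ℂ, σ.PosSemidef ∧ σ.trace = 1 ∧
        ∃ (NK NL : ℕ) (K : Fin NK → Matrix (Fin dA) (Fin dA × Fin p) ℂ)
          (L : Fin NL → Matrix (Fin dB) (Fin dB × Fin q) ℂ),
          (∑ i, (K i)ᴴ * K i = 1) ∧ (∑ j, (L j)ᴴ * L j = 1) ∧
          ∀ ρ, E ρ = ∑ i, ∑ j,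
            (K i ⊗ₖ L j) *
              (Matrix.reindex (Equiv.prodProdProdComm (Fin dA) (Fin dB) (Fin p) (Fin q))
                (Equiv.prodProdProdComm (Fin dA) (Fin dB) (Fin p) (Fin q)) (ρ ⊗ₖ σ)) *
              (K i ⊗ₖ L j)ᴴ)
    (ψ : Fin dA × Fin dB → ℂ) (hψ : star ψ ⬝ᵥ ψ = 1)
    (hfix : E (Matrix.vecMulVec ψ (star ψ)) = Matrix.vecMulVec ψ (star ψ))
    (A : Matrix (Fin dA) (Fin dA) ℂ) (hA : IsUnit A)
    (B : Matrix (Fin dB) (Fin dB) ℂ) (hB : IsUnit B)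
    (hfixA :
      E (Matrix.vecMulVec (normVec ((A ⊗ₖ (1 : Matrix (Fin dB) (Fin dB) ℂ)) *ᵥ ψ))
          (star (normVec ((A ⊗ₖ (1 : Matrix (Fin dB) (Fin dB) ℂ)) *ᵥ ψ)))) =
        Matrix.vecMulVec (normVec ((A ⊗ₖ (1 : Matrix (Fin dB) (Fin dB) ℂ)) *ᵥ ψ))
          (star (normVec ((A ⊗ₖ (1 : Matrix (Fin dB) (Fin dB) ℂ)) *ᵥ ψ))))
    (hfixB :
      E (Matrix.vecMulVec (normVec (((1 : Matrix (Fin dA) (Fin dA) ℂ) ⊗ₖ B) *ᵥ ψ))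
          (star (normVec (((1 : Matrix (Fin dA) (Fin dA) ℂ) ⊗ₖ B) *ᵥ ψ)))) =
        Matrix.vecMulVec (normVec (((1 : Matrix (Fin dA) (Fin dA) ℂ) ⊗ₖ B) *ᵥ ψ))
          (star (normVec (((1 : Matrix (Fin dA) (Fin dA) ℂ) ⊗ₖ B) *ᵥ ψ)))) :
    E (Matrix.vecMulVec (normVec ((A ⊗ₖ B) *ᵥ ψ)) (star (normVec ((A ⊗ₖ B) *ᵥ ψ)))) =
      Matrix.vecMulVec (normVec ((A ⊗ₖ B) *ᵥ ψ)) (star (normVec ((A ⊗ₖ B) *ᵥ ψ))) := by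
  classical
  obtain ⟨p, q, hp, hq, σ, hσ, hσtr, NK, NL, K, L, hK, hL, hE⟩ := hloc
  obtain ⟨S, hSself, -, hSS⟩ := open scoped MatrixOrder in
    CFC.exists_sqrt_of_isSelfAdjoint_of_quasispectrumRestricts hσ.isHermitian
      (QuasispectrumRestricts.nnreal_of_nonneg hσ.nonneg)
  have hSh : Sᴴ = S := hSself
  have hS : S * Sᴴ = σ := by rw [hSh]; exact hSS
  have hψ0 : ψ ≠ 0 := by
    intro h
    rw [h] at hψ
    simp [dotProduct] at hψ
  -- product structure of the Stinespring image of ψ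
  obtain ⟨G, hG⟩ := prodext (K := K) (L := L) hS ψ hψ (by rw [← hE]; exact hfix)
  -- product structure for (A ⊗ 1) ψ
  have huA : (A ⊗ₖ (1 : Matrix (Fin dB) (Fin dB) ℂ)) *ᵥ ψ ≠ 0 :=
    kron_mulVec_ne_zero hA isUnit_one hψ0
  obtain ⟨GA, hGA⟩ := prodext (K := K) (L := L) hS
    (normVec ((A ⊗ₖ (1 : Matrix (Fin dB) (Fin dB) ℂ)) *ᵥ ψ)) (normVec_unit huA)
    (by rw [← hE]; exact hfixA)
  have hOMuA : OM K L S ((A ⊗ₖ (1 : Matrix (Fin dB) (Fin dB) ℂ)) *ᵥ ψ)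
      = (matOf ((A ⊗ₖ (1 : Matrix (Fin dB) (Fin dB) ℂ)) *ᵥ ψ)) ⊗ₖ GA := by
    have hc := normVec_coeff_ne_zero huA
    have h1 := hGA
    rw [normVec_eq_smul, OM_smul, matOf_smul, Matrix.smul_kronecker] at h1
    exact smul_right_injective _ hc h1
  -- product structure for (1 ⊗ B) ψ
  have huB : ((1 : Matrix (Fin dA) (Fin dA) ℂ) ⊗ₖ B) *ᵥ ψ ≠ 0 :=
    kron_mulVec_ne_zero isUnit_one hB hψ0
  obtain ⟨GB, hGB⟩ := prodext (K := K) (L := L) hS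
    (normVec (((1 : Matrix (Fin dA) (Fin dA) ℂ) ⊗ₖ B) *ᵥ ψ)) (normVec_unit huB)
    (by rw [← hE]; exact hfixB)
  have hOMuB : OM K L S (((1 : Matrix (Fin dA) (Fin dA) ℂ) ⊗ₖ B) *ᵥ ψ)
      = (matOf (((1 : Matrix (Fin dA) (Fin dA) ℂ) ⊗ₖ B) *ᵥ ψ)) ⊗ₖ GB := by
    have hc := normVec_coeff_ne_zero huB
    have h1 := hGB
    rw [normVec_eq_smul, OM_smul, matOf_smul, Matrix.smul_kronecker] at h1
    exact smul_right_injective _ hc h1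
  -- the local operators X and Y
  obtain ⟨X, hX⟩ := exists_X (S := S) (L := L) hK A
  obtain ⟨Y, hY⟩ := exists_Y (S := S) (K := K) hL B
  -- core lemma
  have hI : X * (matOf ψ ⊗ₖ G) = (A * matOf ψ) ⊗ₖ GA := by
    rw [← hG, hX ψ, hOMuA, matOf_A]
  have hII : (matOf ψ ⊗ₖ G) * Y = (matOf ψ * Bᵀ) ⊗ₖ GB := by
    rw [← hG, hY ψ, hOMuB, matOf_B]
  obtain ⟨G₄, hG₄⟩ := Stmt14Y.core A Bᵀ (matOf ψ) G GA GB X Y hI hII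
  -- product structure of the Stinespring image of (A ⊗ B) ψ
  have hw0 : OM K L S ((A ⊗ₖ B) *ᵥ ψ) = (A * matOf ψ * Bᵀ) ⊗ₖ G₄ := by
    have hd : (A ⊗ₖ B) *ᵥ ψ
        = (A ⊗ₖ (1 : Matrix (Fin dB) (Fin dB) ℂ)) *ᵥ
            (((1 : Matrix (Fin dA) (Fin dA) ℂ) ⊗ₖ B) *ᵥ ψ) := by
      rw [Matrix.mulVec_mulVec, ← kron_decomp]
    rw [hd, ← hX, ← hY, hG, ← Matrix.mul_assoc, hG₄]
  have hw0ne : (A ⊗ₖ B) *ᵥ ψ ≠ 0 := kron_mulVec_ne_zero hA hB hψ0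
  have hOMw : OM K L S (normVec ((A ⊗ₖ B) *ᵥ ψ))
      = (matOf (normVec ((A ⊗ₖ B) *ᵥ ψ))) ⊗ₖ G₄ := by
    rw [normVec_eq_smul, OM_smul, matOf_smul, Matrix.smul_kronecker, hw0]
    congr 1
    have : matOf ((A ⊗ₖ B) *ᵥ ψ) = A * matOf ψ * Bᵀ := by
      have hd : (A ⊗ₖ B) *ᵥ ψ
          = (A ⊗ₖ (1 : Matrix (Fin dB) (Fin dB) ℂ)) *ᵥ
              (((1 : Matrix (Fin dA) (Fin dA) ℂ) ⊗ₖ B) *ᵥ ψ) := by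
        rw [Matrix.mulVec_mulVec, ← kron_decomp]
      rw [hd, matOf_A, matOf_B, Matrix.mul_assoc]
    rw [this]
  set w := normVec ((A ⊗ₖ B) *ᵥ ψ) with hwdef
  have hwunit : star w ⬝ᵥ w = 1 := normVec_unit hw0ne
  have hwsum : (∑ k : Fin dA × Fin dB, w k * (starRingEnd ℂ) (w k)) = 1 := by
    rw [← hwunit]
    simp only [dotProduct, Pi.star_apply, RCLike.star_def]
    exact Finset.sum_congr rfl fun k _ => (mul_comm _ _)
  have hwent : ∀ (a : Fin dA) (b : Fin dB) (I : Fin NK × Fin p) (J : Fin NL × Fin q),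
      OM K L S w (a, I) (b, J) = w (a, b) * G₄ I J := by
    intro a b I J
    rw [hOMw]
    simp [matOf]
  -- normalization of G₄
  have hg : (∑ I : Fin NK × Fin p, ∑ J : Fin NL × Fin q, G₄ I J * (starRingEnd ℂ) (G₄ I J))
      = 1 := by
    have h2 := L2 (K := K) (L := L) hK hL hS hσtr w
    rw [hwunit] at h2
    have h3 : (∑ aI : Fin dA × (Fin NK × Fin p), ∑ bJ : Fin dB × (Fin NL × Fin q),
        OM K L S w aI bJ * (starRingEnd ℂ) (OM K L S w aI bJ))
        = ∑ k : Fin dA × Fin dB, ∑ IJ : (Fin NK × Fin p) × (Fin NL × Fin q),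
            (w k * (starRingEnd ℂ) (w k)) *
              (G₄ IJ.1 IJ.2 * (starRingEnd ℂ) (G₄ IJ.1 IJ.2)) := by
      set f : Fin dA × (Fin NK × Fin p) → Fin dB × (Fin NL × Fin q) → ℂ :=
        fun aI bJ => OM K L S w aI bJ * (starRingEnd ℂ) (OM K L S w aI bJ) with hf
      calc ∑ aI, ∑ bJ, f aI bJ
          = ∑ z : (Fin dA × (Fin NK × Fin p)) × (Fin dB × (Fin NL × Fin q)), f z.1 z.2 := by
            rw [← Fintype.sum_prod_type']
        _ = ∑ u : (Fin dA × Fin dB) × ((Fin NK × Fin p) × (Fin NL × Fin q)),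
              f (u.1.1, u.2.1) (u.1.2, u.2.2) :=
            (Fintype.sum_equiv
              (Equiv.prodProdProdComm (Fin dA) (Fin dB) (Fin NK × Fin p) (Fin NL × Fin q))
              (fun u => f (u.1.1, u.2.1) (u.1.2, u.2.2))
              (fun z => f z.1 z.2) (fun u => rfl)).symm
        _ = ∑ k : Fin dA × Fin dB, ∑ IJ : (Fin NK × Fin p) × (Fin NL × Fin q),
              f (k.1, IJ.1) (k.2, IJ.2) := by rw [Fintype.sum_prod_type]
        _ = ∑ k : Fin dA × Fin dB, ∑ IJ : (Fin NK × Fin p) × (Fin NL × Fin q),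
            (w k * (starRingEnd ℂ) (w k)) *
              (G₄ IJ.1 IJ.2 * (starRingEnd ℂ) (G₄ IJ.1 IJ.2)) := by
            refine Finset.sum_congr rfl fun k _ => Finset.sum_congr rfl fun IJ _ => ?_
            rw [hf]
            simp only
            rw [hwent k.1 k.2 IJ.1 IJ.2, _root_.map_mul]
            ring
    rw [h3, ← Fintype.sum_mul_sum, hwsum, one_mul] at h2
    rw [← h2]
    exact (Fintype.sum_prod_type'
      (f := fun I J => G₄ I J * (starRingEnd ℂ) (G₄ I J))).symm
  -- conclusion
  rw [hE]
  ext k k'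
  rw [show k = (k.1, k.2) from rfl, show k' = (k'.1, k'.2) from rfl,
    L1 hS w w k.1 k'.1 k.2 k'.2]
  calc ∑ I : Fin NK × Fin p, ∑ J : Fin NL × Fin q,
        OM K L S w (k.1, I) (k.2, J) * (starRingEnd ℂ) (OM K L S w (k'.1, I) (k'.2, J))
      = ∑ I : Fin NK × Fin p, ∑ J : Fin NL × Fin q,
          (w (k.1, k.2) * (starRingEnd ℂ) (w (k'.1, k'.2))) *
            (G₄ I J * (starRingEnd ℂ) (G₄ I J)) := by
        refine Finset.sum_congr rfl fun I _ => Finset.sum_congr rfl fun J _ => ?_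
        rw [hwent k.1 k.2 I J, hwent k'.1 k'.2 I J, _root_.map_mul]
        ring
    _ = (w (k.1, k.2) * (starRingEnd ℂ) (w (k'.1, k'.2))) *
          (∑ I : Fin NK × Fin p, ∑ J : Fin NL × Fin q, G₄ I J * (starRingEnd ℂ) (G₄ I J)) := by
        rw [Finset.mul_sum]
        exact Finset.sum_congr rfl fun I _ => by rw [Finset.mul_sum]
    _ = Matrix.vecMulVec w (star w) (k.1, k.2) (k'.1, k'.2) := by
        rw [hg, mul_one]
        simp [Matrix.vecMulVec_apply, RCLike.star_def]
end
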